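/- arXiv:0905.0385 — 11 statements merged into one kernel-verified Lean document; each statement's English description precedes it below -/
import Mathlib

section
/- Let H and G have near-zero exponents κ_H > 0 and κ_G > 0. Let d > 0, δ > 0, ε > 0, and let h′ ≥ 0, g′ ≥ 0 satisfy κ_H·h′ + κ_G·g′ ≤ d − δ. Then liminf_{s→∞} [log P( h′ ≤ Ĥ_s < h′+ε and g′ ≤ Ĝ_s < g′+ε )] / log s ≥ −(d − δ). (In the paper's notation: the probability of an infinitesimal square E^ε contained in the no-outage set Ô^c is asymptotically at least SNR^{−d+δ}.) -/
open MeasureTheory Filter Set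

lemma aux_tendsto {Ω : Type*} [MeasurableSpace Ω] (μ : Measure Ω) (H : Ω → ℝ) (κ : ℝ)
    (hH : Tendsto (fun t : ℝ => Real.log (μ {ω | H ω < t}).toReal / Real.log t)
      (nhdsWithin 0 (Ioi 0)) (nhds κ))
    (a : ℝ) (ha : 0 < a) :
    Tendsto (fun s : ℝ => Real.log (μ {ω | H ω < s ^ (-a)}).toReal / Real.log s)
      atTop (nhds (-(κ * a))) := by
  have h1 : Tendsto (fun s : ℝ => (s : ℝ) ^ (-a)) atTop (nhdsWithin 0 (Ioi 0)) := by
    rw [tendsto_nhdsWithin_iff]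
    refine ⟨tendsto_rpow_neg_atTop ha, ?_⟩
    filter_upwards [eventually_gt_atTop (0:ℝ)] with s hs
    exact Real.rpow_pos_of_pos hs _
  have h2 := (hH.comp h1).mul_const (-a)
  have heq : ∀ᶠ s : ℝ in atTop,
      ((fun t : ℝ => Real.log (μ {ω | H ω < t}).toReal / Real.log t) ∘ (fun s : ℝ => s ^ (-a))) s * (-a)
        = Real.log (μ {ω | H ω < s ^ (-a)}).toReal / Real.log s := by
    filter_upwards [eventually_gt_atTop (1:ℝ)] with s hs
    have hls : Real.log s ≠ 0 := ne_of_gt (Real.log_pos hs)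
    have : Real.log (s ^ (-a)) = -a * Real.log s := Real.log_rpow (by linarith) _
    simp only [Function.comp_apply, this]
    field_simp
  have := h2.congr' heq
  convert this using 2
  ring

lemma aux_half {Ω : Type*} [MeasurableSpace Ω] (μ : Measure Ω) (H : Ω → ℝ) (κ : ℝ) (hκ : 0 < κ)
    (hH : Tendsto (fun t : ℝ => Real.log (μ {ω | H ω < t}).toReal / Real.log t)
      (nhdsWithin 0 (Ioi 0)) (nhds κ))
    (a b : ℝ) (ha : 0 < a) (hab : a < b) :
    ∀ᶠ s : ℝ in atTop, 0 < (μ {ω | H ω < s ^ (-a)}).toReal ∧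
      (μ {ω | H ω < s ^ (-b)}).toReal ≤ (μ {ω | H ω < s ^ (-a)}).toReal / 2 := by
  have hu := aux_tendsto μ H κ hH a ha
  have hv := aux_tendsto μ H κ hH b (ha.trans hab)
  set c : ℝ := κ * (b - a) / 2 with hc
  have hcpos : 0 < c := div_pos (mul_pos hκ (by linarith)) two_pos
  have hdiff : Tendsto (fun s : ℝ =>
      Real.log (μ {ω | H ω < s ^ (-b)}).toReal / Real.log s
        - Real.log (μ {ω | H ω < s ^ (-a)}).toReal / Real.log s) atTop
      (nhds (-(κ * b) - -(κ * a))) := hv.sub hu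
  have hev1 : ∀ᶠ s : ℝ in atTop,
      Real.log (μ {ω | H ω < s ^ (-b)}).toReal / Real.log s
        - Real.log (μ {ω | H ω < s ^ (-a)}).toReal / Real.log s ≤ -c := by
    have : -(κ * b) - -(κ * a) < -c := by rw [hc]; nlinarith
    exact hdiff.eventually_le_const this
  have hev2 : ∀ᶠ s : ℝ in atTop,
      Real.log (μ {ω | H ω < s ^ (-a)}).toReal / Real.log s < 0 := by
    have : -(κ * a) < 0 := by nlinarith
    exact hu.eventually_lt_const this
  filter_upwards [hev1, hev2, eventually_gt_atTop (1:ℝ),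
    eventually_ge_atTop (Real.exp (Real.log 2 / c))] with s h1 h2 hs hsexp
  set Pa := (μ {ω | H ω < s ^ (-a)}).toReal with hPa
  set Pb := (μ {ω | H ω < s ^ (-b)}).toReal with hPb
  have hlogs : 0 < Real.log s := Real.log_pos hs
  have hPapos : 0 < Pa := by
    rcases lt_or_eq_of_le (show (0:ℝ) ≤ Pa from ENNReal.toReal_nonneg) with h | h
    · exact h
    · exfalso; rw [← h] at h2; simp at h2
  have hclogs : Real.log 2 ≤ c * Real.log s := by
    have := Real.log_le_log (Real.exp_pos _) hsexp
    rw [Real.log_exp] at this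
    rw [div_le_iff₀ hcpos] at this
    nlinarith
  refine ⟨hPapos, ?_⟩
  rcases eq_or_lt_of_le (show (0:ℝ) ≤ Pb from ENNReal.toReal_nonneg) with h | hPbpos
  · rw [← h]; positivity
  · have hlogb : Real.log Pb ≤ Real.log Pa - c * Real.log s := by
      have := mul_le_mul_of_nonneg_right h1 hlogs.le
      rw [sub_mul, div_mul_cancel₀ _ (ne_of_gt hlogs), div_mul_cancel₀ _ (ne_of_gt hlogs)] at this
      linarith
    have : Real.log Pb ≤ Real.log Pa - Real.log 2 := by linarith
    have hfin : Pb ≤ Pa / 2 := by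
      have h3 : Real.exp (Real.log Pb) ≤ Real.exp (Real.log Pa - Real.log 2) :=
        Real.exp_le_exp.2 this
      rw [Real.exp_log hPbpos, Real.exp_sub, Real.exp_log hPapos, Real.exp_log (by norm_num : (0:ℝ) < 2)] at h3
      linarith
    exact hfin

set_option maxHeartbeats 1000000 in
lemma liminf_bound
    {Ω : Type*} [MeasurableSpace Ω] (μ : Measure Ω) [IsProbabilityMeasure μ]
    (H G : Ω → ℝ)
    (hindep : ProbabilityTheory.IndepFun H G μ)
    (κH κG : ℝ) (hκH : 0 < κH) (hκG : 0 < κG)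
    (hH : Tendsto (fun t : ℝ => Real.log (μ {ω | H ω < t}).toReal / Real.log t)
      (nhdsWithin 0 (Ioi 0)) (nhds κH))
    (hG : Tendsto (fun t : ℝ => Real.log (μ {ω | G ω < t}).toReal / Real.log t)
      (nhdsWithin 0 (Ioi 0)) (nhds κG))
    (ε h' g' : ℝ) (hh' : 0 ≤ h') (hg' : 0 ≤ g')
    (α β α' β' : ℝ)
    (hα : h' < α) (hαβ : α < β) (hβ : β < h' + ε)
    (hα' : g' < α') (hαβ' : α' < β') (hβ' : β' < g' + ε) :
    -(κH * α + κG * α') ≤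
      liminf (fun s : ℝ =>
        Real.log (μ {ω |
          (h' ≤ -Real.log (H ω) / Real.log s ∧ -Real.log (H ω) / Real.log s < h' + ε) ∧
          (g' ≤ -Real.log (G ω) / Real.log s ∧ -Real.log (G ω) / Real.log s < g' + ε)}).toReal
        / Real.log s) atTop := by
  have hαpos : 0 < α := lt_of_le_of_lt hh' hα
  have hα'pos : 0 < α' := lt_of_le_of_lt hg' hα'
  set f : ℝ → ℝ := fun s =>
        Real.log (μ {ω |
          (h' ≤ -Real.log (H ω) / Real.log s ∧ -Real.log (H ω) / Real.log s < h' + ε) ∧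
          (g' ≤ -Real.log (G ω) / Real.log s ∧ -Real.log (G ω) / Real.log s < g' + ε)}).toReal
        / Real.log s with hf
  set w : ℝ → ℝ := fun s =>
      Real.log (μ {ω | H ω < s ^ (-α)}).toReal / Real.log s
      + Real.log (μ {ω | G ω < s ^ (-α')}).toReal / Real.log s
      - Real.log 4 / Real.log s with hwdef
  have hw : Tendsto w atTop (nhds (-(κH * α) + -(κG * α') - 0)) := by
    refine Tendsto.sub (Tendsto.add (aux_tendsto μ H κH hH α hαpos)
      (aux_tendsto μ G κG hG α' hα'pos)) ?_
    have h4 : Tendsto (fun s : ℝ => (Real.log s)⁻¹) atTop (nhds 0) :=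
      tendsto_inv_atTop_zero.comp Real.tendsto_log_atTop
    have := h4.const_mul (Real.log 4)
    simpa [div_eq_mul_inv] using this
  have hfw : ∀ᶠ s : ℝ in atTop, w s ≤ f s := by
    filter_upwards [aux_half μ H κH hκH hH α β hαpos hαβ,
      aux_half μ G κG hκG hG α' β' hα'pos hαβ',
      eventually_gt_atTop (1:ℝ)] with s ⟨hPapos, hPb⟩ ⟨hQapos, hQb⟩ hs
    have hlogs : 0 < Real.log s := Real.log_pos hs
    have hspos : (0:ℝ) < s := by linarith
    -- the inner events
    set E : Set Ω := {ω |
          (h' ≤ -Real.log (H ω) / Real.log s ∧ -Real.log (H ω) / Real.log s < h' + ε) ∧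
          (g' ≤ -Real.log (G ω) / Real.log s ∧ -Real.log (G ω) / Real.log s < g' + ε)} with hE
    have hsub : H ⁻¹' (Ico (s ^ (-β)) (s ^ (-α))) ∩ G ⁻¹' (Ico (s ^ (-β')) (s ^ (-α'))) ⊆ E := by
      rintro ω ⟨⟨hH1, hH2⟩, ⟨hG1, hG2⟩⟩
      have hpβ : (0:ℝ) < s ^ (-β) := Real.rpow_pos_of_pos hspos _
      have hpβ' : (0:ℝ) < s ^ (-β') := Real.rpow_pos_of_pos hspos _
      have hHpos : 0 < H ω := lt_of_lt_of_le hpβ hH1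
      have hGpos : 0 < G ω := lt_of_lt_of_le hpβ' hG1
      have l1 : Real.log (H ω) < -α * Real.log s := by
        have := Real.log_lt_log hHpos hH2
        rwa [Real.log_rpow hspos] at this
      have l2 : -β * Real.log s ≤ Real.log (H ω) := by
        have := Real.log_le_log hpβ hH1
        rwa [Real.log_rpow hspos] at this
      have l3 : Real.log (G ω) < -α' * Real.log s := by
        have := Real.log_lt_log hGpos hG2
        rwa [Real.log_rpow hspos] at this
      have l4 : -β' * Real.log s ≤ Real.log (G ω) := by
        have := Real.log_le_log hpβ' hG1
        rwa [Real.log_rpow hspos] at this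
      constructor
      · constructor
        · have : α < -Real.log (H ω) / Real.log s := by
            rw [lt_div_iff₀ hlogs]; nlinarith
          linarith
        · have : -Real.log (H ω) / Real.log s ≤ β := by
            rw [div_le_iff₀ hlogs]; nlinarith
          linarith
      · constructor
        · have : α' < -Real.log (G ω) / Real.log s := by
            rw [lt_div_iff₀ hlogs]; nlinarith
          linarith
        · have : -Real.log (G ω) / Real.log s ≤ β' := by
            rw [div_le_iff₀ hlogs]; nlinarith
          linarith
    -- independence
    have hmul : μ (H ⁻¹' (Ico (s ^ (-β)) (s ^ (-α))) ∩ G ⁻¹' (Ico (s ^ (-β')) (s ^ (-α'))))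
        = μ (H ⁻¹' (Ico (s ^ (-β)) (s ^ (-α)))) * μ (G ⁻¹' (Ico (s ^ (-β')) (s ^ (-α')))) :=
      hindep.measure_inter_preimage_eq_mul _ _ measurableSet_Ico measurableSet_Ico
    set R : ℝ := (μ (H ⁻¹' (Ico (s ^ (-β)) (s ^ (-α))))).toReal with hR
    set R' : ℝ := (μ (G ⁻¹' (Ico (s ^ (-β')) (s ^ (-α'))))).toReal with hR'
    set Pa : ℝ := (μ {ω | H ω < s ^ (-α)}).toReal with hPa
    set Pb : ℝ := (μ {ω | H ω < s ^ (-β)}).toReal with hPbd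
    set Qa : ℝ := (μ {ω | G ω < s ^ (-α')}).toReal with hQa
    set Qb : ℝ := (μ {ω | G ω < s ^ (-β')}).toReal with hQbd
    have hRge : Pa - Pb ≤ R := by
      have hsub2 : {ω | H ω < s ^ (-α)} ⊆
          H ⁻¹' (Ico (s ^ (-β)) (s ^ (-α))) ∪ {ω | H ω < s ^ (-β)} := by
        intro ω hω
        rcases lt_or_ge (H ω) (s ^ (-β)) with h | h
        · exact Or.inr h
        · exact Or.inl ⟨h, hω⟩
      have := (measure_mono hsub2).trans (measure_union_le (μ := μ) _ _)
      have h2 : Pa ≤ R + Pb := by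
        have hne : μ (H ⁻¹' (Ico (s ^ (-β)) (s ^ (-α)))) + μ {ω | H ω < s ^ (-β)} ≠ ⊤ :=
          ENNReal.add_ne_top.2 ⟨measure_ne_top μ _, measure_ne_top μ _⟩
        have := ENNReal.toReal_mono hne this
        rwa [ENNReal.toReal_add (measure_ne_top μ _) (measure_ne_top μ _)] at this
      linarith
    have hR'ge : Qa - Qb ≤ R' := by
      have hsub2 : {ω | G ω < s ^ (-α')} ⊆
          G ⁻¹' (Ico (s ^ (-β')) (s ^ (-α'))) ∪ {ω | G ω < s ^ (-β')} := by
        intro ω hω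
        rcases lt_or_ge (G ω) (s ^ (-β')) with h | h
        · exact Or.inr h
        · exact Or.inl ⟨h, hω⟩
      have := (measure_mono hsub2).trans (measure_union_le (μ := μ) _ _)
      have h2 : Qa ≤ R' + Qb := by
        have hne : μ (G ⁻¹' (Ico (s ^ (-β')) (s ^ (-α')))) + μ {ω | G ω < s ^ (-β')} ≠ ⊤ :=
          ENNReal.add_ne_top.2 ⟨measure_ne_top μ _, measure_ne_top μ _⟩
        have := ENNReal.toReal_mono hne this
        rwa [ENNReal.toReal_add (measure_ne_top μ _) (measure_ne_top μ _)] at this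
      linarith
    have hRhalf : Pa / 2 ≤ R := by linarith
    have hR'half : Qa / 2 ≤ R' := by linarith
    have hEge : Pa * Qa / 4 ≤ (μ E).toReal := by
      have h1 : R * R' ≤ (μ E).toReal := by
        have := measure_mono (μ := μ) hsub
        rw [hmul] at this
        have := ENNReal.toReal_mono (measure_ne_top μ _) this
        rwa [ENNReal.toReal_mul] at this
      have h2 : Pa / 2 * (Qa / 2) ≤ R * R' := by
        apply mul_le_mul hRhalf hR'half (by positivity) (by positivity)
      nlinarith
    have hEpos : 0 < (μ E).toReal := lt_of_lt_of_le (by positivity) hEge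
    have hlog : Real.log (Pa * Qa / 4) ≤ Real.log (μ E).toReal :=
      Real.log_le_log (by positivity) hEge
    have hlogexp : Real.log (Pa * Qa / 4) = Real.log Pa + Real.log Qa - Real.log 4 := by
      rw [Real.log_div (by positivity) (by norm_num), Real.log_mul (ne_of_gt hPapos) (ne_of_gt hQapos)]
    rw [hwdef, hf]
    simp only
    rw [← add_div, div_sub_div_same]
    gcongr
    rw [← hlogexp]; exact hlog
  have hcobdd : IsCoboundedUnder (· ≥ ·) atTop f := by
    apply isCoboundedUnder_ge_of_eventually_le (x := 0) atTop
    filter_upwards [eventually_gt_atTop (1:ℝ)] with s hs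
    have hlogs : 0 < Real.log s := Real.log_pos hs
    apply div_nonpos_of_nonpos_of_nonneg _ hlogs.le
    apply Real.log_nonpos ENNReal.toReal_nonneg
    calc (μ _).toReal ≤ (1 : ENNReal).toReal := ENNReal.toReal_mono ENNReal.one_ne_top prob_le_one
      _ = 1 := by simp
  have := liminf_le_liminf hfw hw.isBoundedUnder_ge hcobdd
  rw [hw.liminf_eq] at this
  linarith [this]

/-- If `H` and `G` are independent nonnegative random variables with
near-zero exponents `κH, κG > 0`, and `h', g' ≥ 0` satisfy `κH⬝h' + κG⬝g' ≤ d - δ`,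
then the probability of the infinitesimal square
`{h' ≤ Ĥ_s < h'+ε, g' ≤ Ĝ_s < g'+ε}` (where `Ĥ_s = -log H / log s`)
is asymptotically at least `s^{-(d-δ)}` on the logarithmic scale. -/
theorem stmt_0
    {Ω : Type*} [MeasurableSpace Ω] (μ : Measure Ω) [IsProbabilityMeasure μ]
    (H G : Ω → ℝ)
    (hHmeas : Measurable H) (hGmeas : Measurable G)
    (hHnonneg : ∀ ω, 0 ≤ H ω) (hGnonneg : ∀ ω, 0 ≤ G ω)
    (hindep : ProbabilityTheory.IndepFun H G μ)
    (κH κG : ℝ) (hκH : 0 < κH) (hκG : 0 < κG)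
    (hH : Tendsto (fun t : ℝ => Real.log (μ {ω | H ω < t}).toReal / Real.log t)
      (nhdsWithin 0 (Ioi 0)) (nhds κH))
    (hG : Tendsto (fun t : ℝ => Real.log (μ {ω | G ω < t}).toReal / Real.log t)
      (nhdsWithin 0 (Ioi 0)) (nhds κG))
    (d δ ε h' g' : ℝ) (hd : 0 < d) (hδ : 0 < δ) (hε : 0 < ε)
    (hh' : 0 ≤ h') (hg' : 0 ≤ g')
    (hcon : κH * h' + κG * g' ≤ d - δ) :
    -(d - δ) ≤
      liminf (fun s : ℝ =>
        Real.log (μ {ω |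
          (h' ≤ -Real.log (H ω) / Real.log s ∧ -Real.log (H ω) / Real.log s < h' + ε) ∧
          (g' ≤ -Real.log (G ω) / Real.log s ∧ -Real.log (G ω) / Real.log s < g' + ε)}).toReal
        / Real.log s) atTop := by
  by_contra hcontra
  push_neg at hcontra
  set L := liminf (fun s : ℝ =>
        Real.log (μ {ω |
          (h' ≤ -Real.log (H ω) / Real.log s ∧ -Real.log (H ω) / Real.log s < h' + ε) ∧
          (g' ≤ -Real.log (G ω) / Real.log s ∧ -Real.log (G ω) / Real.log s < g' + ε)}).toReal
        / Real.log s) atTop with hL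
  have hsum : 0 < κH + κG := by linarith
  set θ : ℝ := min (ε / 3) ((-(d - δ) - L) / (2 * (κH + κG))) with hθ
  have hθpos : 0 < θ := lt_min (by linarith) (div_pos (by linarith) (by linarith))
  have hθε : θ ≤ ε / 3 := min_le_left _ _
  have hθ2 : θ * (κH + κG) ≤ (-(d - δ) - L) / 2 := by
    have h1 : θ ≤ (-(d - δ) - L) / (2 * (κH + κG)) := min_le_right _ _
    have := mul_le_mul_of_nonneg_right h1 hsum.le
    rw [div_mul_eq_mul_div, mul_comm (2 : ℝ) (κH + κG), ← div_div,
      mul_div_assoc, div_self (ne_of_gt hsum), mul_one] at this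
    linarith
  have key := liminf_bound μ H G hindep κH κG hκH hκG hH hG ε h' g' hh' hg'
    (h' + θ) (h' + 2 * θ) (g' + θ) (g' + 2 * θ)
    (by linarith) (by linarith) (by linarith) (by linarith) (by linarith) (by linarith)
  rw [← hL] at key
  nlinarith
end

section
/- Let H and G be independent with near-zero exponents κ_H > 0 and κ_G > 0, and suppose each has an exponential tail. Then for every d > 0, lim_{s→∞} [log P( Ĥ_s ≥ 0, Ĝ_s ≥ 0, and κ_H·Ĥ_s + κ_G·Ĝ_s ≥ d )] / log s = −d. Equivalently, the probability of the outage event {H ≤ 1, G ≤ 1, H^{κ_H}·G^{κ_G} ≤ s^{−d}} decays exactly like s^{−d} on the logarithmic scale: P(outage) ≐ SNR^{−d}. -/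
open MeasureTheory Filter Set

lemma aux_bounds {Ω : Type*} [MeasurableSpace Ω] (μ : Measure Ω) [IsProbabilityMeasure μ]
    (H : Ω → ℝ) (κ η : ℝ) (hη : 0 < η) (hηκ : η < κ)
    (hH : Tendsto (fun t : ℝ => Real.log (μ {ω | H ω < t}).toReal / Real.log t)
      (nhdsWithin 0 (Ioi 0)) (nhds κ)) :
    ∃ t0 : ℝ, 0 < t0 ∧ t0 ≤ 1 ∧ ∀ t : ℝ, 0 < t → t < t0 →
      t ^ (κ + η) ≤ (μ {ω | H ω < t}).toReal ∧ (μ {ω | H ω < t}).toReal ≤ t ^ (κ - η) := by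
  have hev : ∀ᶠ t in nhdsWithin 0 (Ioi 0),
      |Real.log (μ {ω | H ω < t}).toReal / Real.log t - κ| < η := by
    have := (Metric.tendsto_nhds.mp hH) η hη
    simpa [Real.dist_eq] using this
  rw [eventually_nhdsWithin_iff, Metric.eventually_nhds_iff] at hev
  obtain ⟨ε, hε, hev⟩ := hev
  refine ⟨min ε 1, by positivity, min_le_right _ _, fun t ht htt => ?_⟩
  have ht1 : t < 1 := lt_of_lt_of_le htt (min_le_right _ _)
  have htε : dist t 0 < ε := by
    rw [Real.dist_eq, sub_zero, abs_of_pos ht]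
    exact lt_of_lt_of_le htt (min_le_left _ _)
  have hrat := hev htε ht
  set P := (μ {ω | H ω < t}).toReal with hP
  have hlt : Real.log t < 0 := Real.log_neg ht ht1
  have hP0 : 0 < P := by
    rcases lt_or_eq_of_le (ENNReal.toReal_nonneg : (0:ℝ) ≤ P) with h | h
    · exact h
    · exfalso
      rw [hP, ← h] at hrat
      simp only [Real.log_zero, zero_div, zero_sub, abs_neg, abs_of_pos (hη.trans hηκ)] at hrat
      linarith
  have hrat' := abs_lt.mp hrat
  have hlogP : Real.log P = (Real.log P / Real.log t) * Real.log t :=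
    (div_mul_cancel₀ _ (ne_of_lt hlt)).symm
  have hub : Real.log P ≤ (κ - η) * Real.log t := by
    rw [hlogP]
    exact mul_le_mul_of_nonpos_right (by linarith [hrat'.1]) (le_of_lt hlt)
  have hlb : (κ + η) * Real.log t ≤ Real.log P := by
    rw [hlogP]
    exact mul_le_mul_of_nonpos_right (by linarith [hrat'.2]) (le_of_lt hlt)
  constructor
  · calc t ^ (κ + η) = Real.exp (Real.log t * (κ + η)) := Real.rpow_def_of_pos ht _
    _ ≤ Real.exp (Real.log P) := Real.exp_le_exp.mpr (by rw [mul_comm]; exact hlb)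
    _ = P := Real.exp_log hP0
  · calc P = Real.exp (Real.log P) := (Real.exp_log hP0).symm
    _ ≤ Real.exp (Real.log t * (κ - η)) := Real.exp_le_exp.mpr (by rw [mul_comm]; exact hub)
    _ = t ^ (κ - η) := (Real.rpow_def_of_pos ht _).symm


lemma aux_zero {Ω : Type*} [MeasurableSpace Ω] (μ : Measure Ω) [IsProbabilityMeasure μ]
    (H : Ω → ℝ) (κ η t0 : ℝ) (hη : 0 < η) (hηκ : η < κ) (ht0 : 0 < t0)
    (hbnd : ∀ t : ℝ, 0 < t → t < t0 → (μ {ω | H ω < t}).toReal ≤ t ^ (κ - η)) :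
    μ {ω | H ω = 0} = 0 := by
  have hp : 0 < κ - η := by linarith
  have key : ∀ ε : ℝ, 0 < ε → (μ {ω | H ω = 0}).toReal ≤ ε := by
    intro ε hε
    set t := min (t0 / 2) (ε ^ (κ - η)⁻¹) with hT
    have ht : 0 < t := lt_min (by linarith) (Real.rpow_pos_of_pos hε _)
    have htt0 : t < t0 := lt_of_le_of_lt (min_le_left _ _) (by linarith)
    have hsub : (μ {ω | H ω = 0}).toReal ≤ (μ {ω | H ω < t}).toReal := by
      apply ENNReal.toReal_mono (measure_ne_top μ _)
      exact measure_mono (fun ω hω => by simp only [mem_setOf_eq] at *; linarith)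
    refine le_trans hsub (le_trans (hbnd t ht htt0) ?_)
    calc t ^ (κ - η) ≤ (ε ^ (κ - η)⁻¹) ^ (κ - η) :=
          Real.rpow_le_rpow (le_of_lt ht) (min_le_right _ _) (le_of_lt hp)
      _ = ε := Real.rpow_inv_rpow (le_of_lt hε) (ne_of_gt hp)
  have h0 : (μ {ω | H ω = 0}).toReal ≤ 0 := by
    by_contra h
    push_neg at h
    linarith [key _ (half_pos h)]
  have := le_antisymm h0 ENNReal.toReal_nonneg
  rwa [ENNReal.toReal_eq_zero_iff, or_iff_left (measure_ne_top μ _)] at this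


lemma aux_factor {Ω : Type*} [MeasurableSpace Ω] (μ : Measure Ω) [IsProbabilityMeasure μ]
    (H : Ω → ℝ) (κ r t0 δ s : ℝ) (hκ : 0 < κ) (hr : 0 < r) (hr1 : r < 1) (hδ : 0 < δ)
    (hbnd : ∀ t : ℝ, 0 < t → t < t0 → (μ {ω | H ω < t}).toReal ≤ t ^ (κ - κ * r))
    (hs : 1 < s) (h2 : 2 * s ^ (-(δ / κ)) < t0) (j : ℕ) :
    (μ (H ⁻¹' Iic (s ^ (-((j : ℝ) * δ) / κ)))).toReal
      ≤ 2 ^ κ * s ^ (-((j : ℝ) * δ) * (1 - r)) := by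
  have hs0 : (0:ℝ) < s := lt_trans one_pos hs
  have h2κ : (1:ℝ) ≤ 2 ^ κ := Real.one_le_rpow one_le_two (le_of_lt hκ)
  rcases Nat.eq_zero_or_pos j with hj | hj
  · subst hj
    simp only [Nat.cast_zero, zero_mul, neg_zero, zero_div, Real.rpow_zero, mul_one]
    calc (μ (H ⁻¹' Iic 1)).toReal ≤ (μ univ).toReal :=
          ENNReal.toReal_mono (measure_ne_top μ _) (measure_mono (subset_univ _))
      _ = 1 := by simp
      _ ≤ 2 ^ κ := h2κ
  · set c := s ^ (-((j : ℝ) * δ) / κ) with hc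
    have hc0 : 0 < c := Real.rpow_pos_of_pos hs0 _
    have hcle : c ≤ s ^ (-(δ / κ)) := by
      apply Real.rpow_le_rpow_of_exponent_le (le_of_lt hs)
      have : (1:ℝ) ≤ (j:ℝ) := by exact_mod_cast hj
      rw [neg_div, neg_le_neg_iff, div_le_div_iff_of_pos_right hκ]
      nlinarith
    have hsub : H ⁻¹' Iic c ⊆ {ω | H ω < 2 * c} := fun ω hω => by
      simp only [mem_preimage, mem_Iic] at hω; simp only [mem_setOf_eq]; linarith
    have h2c : 2 * c < t0 := lt_of_le_of_lt (by linarith) h2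
    have := hbnd (2 * c) (by linarith) h2c
    calc (μ (H ⁻¹' Iic c)).toReal ≤ (μ {ω | H ω < 2 * c}).toReal :=
          ENNReal.toReal_mono (measure_ne_top μ _) (measure_mono hsub)
      _ ≤ (2 * c) ^ (κ - κ * r) := this
      _ = 2 ^ (κ - κ * r) * c ^ (κ - κ * r) := Real.mul_rpow (by norm_num) (le_of_lt hc0)
      _ ≤ 2 ^ κ * s ^ (-((j : ℝ) * δ) * (1 - r)) := by
          apply mul_le_mul
          · exact Real.rpow_le_rpow_of_exponent_le one_le_two (by nlinarith)
          · rw [hc, ← Real.rpow_mul (le_of_lt hs0)]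
            apply le_of_eq
            congr 1
            field_simp
          · exact Real.rpow_nonneg (le_of_lt hc0) _
          · linarith

lemma aux_upper {Ω : Type*} [MeasurableSpace Ω] (μ : Measure Ω) [IsProbabilityMeasure μ]
    (H G : Ω → ℝ) (hHnonneg : ∀ ω, 0 ≤ H ω) (hGnonneg : ∀ ω, 0 ≤ G ω)
    (hindep : ProbabilityTheory.IndepFun H G μ)
    (κH κG d r δ t0H t0G s : ℝ) (m : ℕ)
    (hκH : 0 < κH) (hκG : 0 < κG) (hd : 0 < d)
    (hr0 : 0 < r) (hr1 : r < 1)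
    (hm3 : 3 ≤ m) (hδ0 : 0 < δ) (hmd : (m:ℝ) * δ = d)
    (hbH : ∀ t : ℝ, 0 < t → t < t0H → (μ {ω | H ω < t}).toReal ≤ t ^ (κH - κH * r))
    (hbG : ∀ t : ℝ, 0 < t → t < t0G → (μ {ω | G ω < t}).toReal ≤ t ^ (κG - κG * r))
    (hs1 : 1 < s)
    (hs2 : 2 * s ^ (-(δ / κH)) < t0H) (hs3 : 2 * s ^ (-(δ / κG)) < t0G) :
    (μ {ω |
        0 ≤ -Real.log (H ω) / Real.log s ∧
        0 ≤ -Real.log (G ω) / Real.log s ∧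
        d ≤ κH * (-Real.log (H ω) / Real.log s)
          + κG * (-Real.log (G ω) / Real.log s)}).toReal
      ≤ ((m:ℝ) + 1) * ((2:ℝ) ^ κH * (2:ℝ) ^ κG) * s ^ (-(d - δ) * (1 - r)) := by
  have hs0 : (0:ℝ) < s := lt_trans one_pos hs1
  have hL : 0 < Real.log s := Real.log_pos hs1
  set L := Real.log s with hLdef
  set E := {ω |
        0 ≤ -Real.log (H ω) / L ∧
        0 ≤ -Real.log (G ω) / L ∧
        d ≤ κH * (-Real.log (H ω) / L) + κG * (-Real.log (G ω) / L)} with hEdef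
  set A : ℕ → Set Ω := fun k =>
      H ⁻¹' Iic (s ^ (-((((min k (m-1) : ℕ)):ℝ) * δ) / κH)) ∩
      G ⁻¹' Iic (s ^ (-((((m-1-k : ℕ)):ℝ) * δ) / κG)) with hAdef
  have key : ∀ (F : Ω → ℝ) (κ : ℝ), 0 < κ → ∀ (j : ℕ) (ω : Ω),
      (j:ℝ) * (δ * L) ≤ κ * (-Real.log (F ω)) → F ω ≤ s ^ (-((j:ℝ) * δ) / κ) := by
    intro F κ hκ j ω hj
    have hexp : s ^ (-((j:ℝ) * δ) / κ) = Real.exp (-((j:ℝ) * δ * L) / κ) := by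
      rw [Real.rpow_def_of_pos hs0]; congr 1; ring
    rcases le_or_gt (F ω) 0 with h | h
    · exact le_trans h (le_of_lt (by rw [hexp]; exact Real.exp_pos _))
    · have hstep : (j:ℝ) * δ * L / κ ≤ -Real.log (F ω) := by
        rw [div_le_iff₀ hκ]; nlinarith
      have hlog : Real.log (F ω) ≤ -((j:ℝ) * δ * L) / κ := by
        rw [neg_div]; linarith
      calc F ω = Real.exp (Real.log (F ω)) := (Real.exp_log h).symm
        _ ≤ Real.exp (-((j:ℝ) * δ * L) / κ) := Real.exp_le_exp.mpr hlog
        _ = s ^ (-((j:ℝ) * δ) / κ) := hexp.symm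
  have hcover : E ⊆ ⋃ k ∈ Finset.range (m+1), A k := by
    intro ω hω
    obtain ⟨h1, h2, h3⟩ := hω
    have hX0 : 0 ≤ -Real.log (H ω) := by
      have := mul_nonneg h1 hL.le
      rwa [div_mul_cancel₀ _ hL.ne'] at this
    have hY0 : 0 ≤ -Real.log (G ω) := by
      have := mul_nonneg h2 hL.le
      rwa [div_mul_cancel₀ _ hL.ne'] at this
    have hXY : d * L ≤ κH * (-Real.log (H ω)) + κG * (-Real.log (G ω)) := by
      have heq : κH * (-Real.log (H ω) / L) + κG * (-Real.log (G ω) / L)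
          = (κH * (-Real.log (H ω)) + κG * (-Real.log (G ω))) / L := by
        field_simp
      rw [heq] at h3
      exact (le_div_iff₀ hL).mp h3
    have hδL : 0 < δ * L := mul_pos hδ0 hL
    have hq0 : (0:ℝ) ≤ κH * (-Real.log (H ω)) / (δ * L) :=
      div_nonneg (mul_nonneg hκH.le hX0) hδL.le
    obtain ⟨k, hkm, hk1, hk2⟩ : ∃ k : ℕ, k ≤ m ∧
        (k:ℝ) ≤ κH * (-Real.log (H ω)) / (δ * L) ∧
        (k < m → κH * (-Real.log (H ω)) / (δ * L) < (k:ℝ) + 1) := by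
      refine ⟨min m ⌊κH * (-Real.log (H ω)) / (δ * L)⌋₊, min_le_left _ _, ?_, ?_⟩
      · calc ((min m ⌊κH * (-Real.log (H ω)) / (δ * L)⌋₊ : ℕ):ℝ)
            ≤ (⌊κH * (-Real.log (H ω)) / (δ * L)⌋₊ : ℝ) := by
              exact_mod_cast min_le_right m _
          _ ≤ _ := Nat.floor_le hq0
      · intro hlt
        have hf : ⌊κH * (-Real.log (H ω)) / (δ * L)⌋₊ < m := by
          by_contra hf
          push_neg at hf
          rw [min_eq_left hf] at hlt
          exact lt_irrefl _ hlt
        rw [min_eq_right hf.le]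
        exact Nat.lt_floor_add_one _
    have hmH : H ω ≤ s ^ (-((((min k (m-1) : ℕ)):ℝ) * δ) / κH) := by
      apply key H κH hκH
      have h4 : ((min k (m-1) : ℕ):ℝ) ≤ κH * (-Real.log (H ω)) / (δ * L) :=
        le_trans (by exact_mod_cast (min_le_left k (m-1))) hk1
      exact (le_div_iff₀ hδL).mp h4
    have hmG : G ω ≤ s ^ (-((((m-1-k : ℕ)):ℝ) * δ) / κG) := by
      apply key G κG hκG
      rcases eq_or_lt_of_le hkm with hkm' | hkm'
      · have h5 : m - 1 - k = 0 := by omega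
        rw [h5]
        simpa using mul_nonneg hκG.le hY0
      · have hflt : κH * (-Real.log (H ω)) < ((k:ℝ) + 1) * (δ * L) :=
          (div_lt_iff₀ hδL).mp (hk2 hkm')
        have hcast : ((m-1-k : ℕ):ℝ) = (m:ℝ) - 1 - (k:ℝ) := by
          rw [Nat.cast_sub (by omega : k ≤ m - 1), Nat.cast_sub (by omega : 1 ≤ m)]
          norm_num
        rw [hcast]
        have hdL : d * L = (m:ℝ) * (δ * L) := by rw [← hmd]; ring
        nlinarith
    exact mem_iUnion₂.mpr ⟨k, Finset.mem_range.mpr (by omega), hmH, hmG⟩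
  have hAk : ∀ k ∈ Finset.range (m+1),
      (μ (A k)).toReal ≤ (2:ℝ) ^ κH * (2:ℝ) ^ κG * s ^ (-(d - δ) * (1 - r)) := by
    intro k hk
    have hkm : k ≤ m := Nat.lt_succ_iff.mp (Finset.mem_range.mp hk)
    have hind : μ (A k) = μ (H ⁻¹' Iic (s ^ (-((((min k (m-1) : ℕ)):ℝ) * δ) / κH)))
        * μ (G ⁻¹' Iic (s ^ (-((((m-1-k : ℕ)):ℝ) * δ) / κG))) :=
      hindep.measure_inter_preimage_eq_mul _ _ measurableSet_Iic measurableSet_Iic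
    rw [hind, ENNReal.toReal_mul]
    have f1 := aux_factor μ H κH r t0H δ s hκH hr0 hr1 hδ0 hbH hs1 hs2 (min k (m-1))
    have f2 := aux_factor μ G κG r t0G δ s hκG hr0 hr1 hδ0 hbG hs1 hs3 (m-1-k)
    calc _ ≤ (2 ^ κH * s ^ (-((((min k (m-1) : ℕ)):ℝ) * δ) * (1 - r)))
          * (2 ^ κG * s ^ (-((((m-1-k : ℕ)):ℝ) * δ) * (1 - r))) :=
        mul_le_mul f1 f2 ENNReal.toReal_nonneg (by positivity)
      _ = (2:ℝ) ^ κH * (2:ℝ) ^ κG * s ^ (-(d - δ) * (1 - r)) := by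
        have hAB : ((min k (m-1) : ℕ):ℝ) + ((m-1-k : ℕ):ℝ) = (m:ℝ) - 1 := by
          rcases le_or_gt k (m-1) with hc | hc
          · rw [min_eq_left hc, Nat.cast_sub hc, Nat.cast_sub (by omega : 1 ≤ m)]
            push_cast
            ring
          · rw [min_eq_right (by omega : m-1 ≤ k), (by omega : m-1-k = 0),
              Nat.cast_sub (by omega : 1 ≤ m)]
            push_cast
            ring
        have hsum : (-((((min k (m-1) : ℕ)):ℝ) * δ) * (1 - r))
            + (-((((m-1-k : ℕ)):ℝ) * δ) * (1 - r)) = -(d - δ) * (1 - r) := by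
          linear_combination (-(δ) * (1 - r)) * hAB - (1 - r) * hmd
        rw [← hsum, Real.rpow_add hs0]
        ring
  have hμsum : μ E ≤ ∑ k ∈ Finset.range (m+1), μ (A k) :=
    le_trans (measure_mono hcover) (measure_biUnion_finset_le _ _)
  have htR : (μ E).toReal ≤ ∑ k ∈ Finset.range (m+1), (μ (A k)).toReal := by
    rw [← ENNReal.toReal_sum (fun a _ => measure_ne_top μ _)]
    exact ENNReal.toReal_mono
      (ne_of_lt (ENNReal.sum_lt_top.mpr (fun a _ => measure_lt_top μ _))) hμsum
  calc (μ E).toReal ≤ ∑ k ∈ Finset.range (m+1), (μ (A k)).toReal := htR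
    _ ≤ ∑ _k ∈ Finset.range (m+1), (2:ℝ) ^ κH * (2:ℝ) ^ κG * s ^ (-(d - δ) * (1 - r)) :=
        Finset.sum_le_sum hAk
    _ = ((m:ℝ)+1) * ((2:ℝ) ^ κH * (2:ℝ) ^ κG) * s ^ (-(d - δ) * (1 - r)) := by
        rw [Finset.sum_const, Finset.card_range, nsmul_eq_mul]
        push_cast
        ring



lemma aux_lower {Ω : Type*} [MeasurableSpace Ω] (μ : Measure Ω) [IsProbabilityMeasure μ]
    (H G : Ω → ℝ) (hHnonneg : ∀ ω, 0 ≤ H ω) (hGnonneg : ∀ ω, 0 ≤ G ω)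
    (hindep : ProbabilityTheory.IndepFun H G μ)
    (κH κG d e a r ε0 c0 t0H s : ℝ)
    (hκH : 0 < κH) (hκG : 0 < κG) (hd : 0 < d) (he0 : 0 < e)
    (hr0 : 0 < r) (hrd : d * r ≤ e / 8)
    (haκ : a * κH = d) (ha0 : 0 < a)
    (hbH : ∀ t : ℝ, 0 < t → t < t0H → t ^ (κH + κH * r) ≤ (μ {ω | H ω < t}).toReal)
    (hε00 : 0 < ε0) (hε01 : ε0 < 1)
    (hc0 : c0 ≤ (μ {ω | G ω < ε0}).toReal) (hc00 : 0 < c0)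
    (hzH : μ {ω | H ω = 0} = 0) (hzG : μ {ω | G ω = 0} = 0)
    (hs1 : 1 < s) (hs4 : s ^ (-a) < t0H) (hs5 : -(e/2) * Real.log s ≤ Real.log c0) :
    s ^ (-(d + e)) ≤ (μ {ω |
        0 ≤ -Real.log (H ω) / Real.log s ∧
        0 ≤ -Real.log (G ω) / Real.log s ∧
        d ≤ κH * (-Real.log (H ω) / Real.log s)
          + κG * (-Real.log (G ω) / Real.log s)}).toReal := by
  have hs0 : (0:ℝ) < s := lt_trans one_pos hs1
  have hs1' : (1:ℝ) ≤ s := hs1.le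
  have hL : 0 < Real.log s := Real.log_pos hs1
  have hsa0 : 0 < s ^ (-a) := Real.rpow_pos_of_pos hs0 _
  set L := Real.log s with hLdef
  set E := {ω |
        0 ≤ -Real.log (H ω) / L ∧
        0 ≤ -Real.log (G ω) / L ∧
        d ≤ κH * (-Real.log (H ω) / L) + κG * (-Real.log (G ω) / L)} with hEdef
  have hEmem : ∀ ω, 0 < H ω → H ω < s ^ (-a) → 0 < G ω → G ω < ε0 → ω ∈ E := by
    intro ω hH0 hHlt hG0 hGlt
    have hlogH : Real.log (H ω) < -a * L := by
      have := Real.log_lt_log hH0 hHlt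
      rwa [Real.log_rpow hs0] at this
    have hlogG : Real.log (G ω) < 0 := by
      have := Real.log_lt_log hG0 hGlt
      have h2 : Real.log ε0 < 0 := Real.log_neg hε00 hε01
      linarith
    have hXa : a < -Real.log (H ω) / L := by
      rw [lt_div_iff₀ hL]; nlinarith
    refine ⟨le_of_lt (lt_trans ha0 hXa), div_nonneg (by linarith) hL.le, ?_⟩
    have h1 : d < κH * (-Real.log (H ω) / L) := by
      calc d = κH * a := by rw [← haκ]; ring
        _ < _ := mul_lt_mul_of_pos_left hXa hκH
    have h2 : 0 ≤ κG * (-Real.log (G ω) / L) :=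
      mul_nonneg hκG.le (div_nonneg (by linarith) hL.le)
    linarith
  have hsub : (H ⁻¹' Iio (s ^ (-a)) ∩ G ⁻¹' Iio ε0)
      \ ({ω | H ω = 0} ∪ {ω | G ω = 0}) ⊆ E := by
    rintro ω ⟨⟨h1, h2⟩, h3⟩
    simp only [mem_union, mem_setOf_eq, not_or] at h3
    exact hEmem ω (lt_of_le_of_ne (hHnonneg ω) (Ne.symm h3.1)) h1
      (lt_of_le_of_ne (hGnonneg ω) (Ne.symm h3.2)) h2
  have hμeq : μ (H ⁻¹' Iio (s ^ (-a)) ∩ G ⁻¹' Iio ε0) ≤ μ E :=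
    le_trans (le_of_eq (measure_diff_null (measure_union_null hzH hzG)).symm)
      (measure_mono hsub)
  have hind : μ (H ⁻¹' Iio (s ^ (-a)) ∩ G ⁻¹' Iio ε0)
      = μ (H ⁻¹' Iio (s ^ (-a))) * μ (G ⁻¹' Iio ε0) :=
    hindep.measure_inter_preimage_eq_mul _ _ measurableSet_Iio measurableSet_Iio
  have h1 : (s ^ (-a)) ^ (κH + κH * r) ≤ (μ (H ⁻¹' Iio (s ^ (-a)))).toReal :=
    hbH _ hsa0 hs4
  have h2 : c0 ≤ (μ (G ⁻¹' Iio ε0)).toReal := hc0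
  calc s ^ (-(d + e)) = s ^ (-(d + e/2)) * s ^ (-(e/2)) := by
        rw [← Real.rpow_add hs0]; ring_nf
    _ ≤ (s ^ (-a)) ^ (κH + κH * r) * c0 := by
        apply mul_le_mul ?_ ?_ (Real.rpow_nonneg hs0.le _) (Real.rpow_nonneg hsa0.le _)
        · have hexp : -(d + e/2) ≤ (-a) * (κH + κH * r) := by nlinarith
          calc s ^ (-(d + e/2)) ≤ s ^ ((-a) * (κH + κH * r)) :=
                Real.rpow_le_rpow_of_exponent_le hs1' hexp
            _ = (s ^ (-a)) ^ (κH + κH * r) := Real.rpow_mul hs0.le _ _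
        · calc s ^ (-(e/2)) = Real.exp (-(e/2) * L) := by
                rw [Real.rpow_def_of_pos hs0, hLdef]; ring_nf
            _ ≤ Real.exp (Real.log c0) := Real.exp_le_exp.mpr hs5
            _ = c0 := Real.exp_log hc00
    _ ≤ (μ (H ⁻¹' Iio (s ^ (-a)))).toReal * (μ (G ⁻¹' Iio ε0)).toReal :=
        mul_le_mul h1 h2 hc00.le ENNReal.toReal_nonneg
    _ = (μ (H ⁻¹' Iio (s ^ (-a)) ∩ G ⁻¹' Iio ε0)).toReal := by
        rw [hind, ENNReal.toReal_mul]
    _ ≤ (μ E).toReal := ENNReal.toReal_mono (measure_ne_top μ _) hμeq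

/-- If `H` and `G` are independent nonnegative random variables with
near-zero exponents `κH, κG > 0` and exponential tails, then for every `d > 0` the
probability of the outage event `{Ĥ_s ≥ 0, Ĝ_s ≥ 0, κH⬝Ĥ_s + κG⬝Ĝ_s ≥ d}`
(where `Ĥ_s = -log H / log s`) decays exactly like `s^{-d}` on the logarithmic
scale: `lim_{s→∞} log P(outage) / log s = -d`. -/
theorem stmt_1
    {Ω : Type*} [MeasurableSpace Ω] (μ : Measure Ω) [IsProbabilityMeasure μ]
    (H G : Ω → ℝ)
    (hHmeas : Measurable H) (hGmeas : Measurable G)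
    (hHnonneg : ∀ ω, 0 ≤ H ω) (hGnonneg : ∀ ω, 0 ≤ G ω)
    (hindep : ProbabilityTheory.IndepFun H G μ)
    (κH κG : ℝ) (hκH : 0 < κH) (hκG : 0 < κG)
    (hH : Tendsto (fun t : ℝ => Real.log (μ {ω | H ω < t}).toReal / Real.log t)
      (nhdsWithin 0 (Ioi 0)) (nhds κH))
    (hG : Tendsto (fun t : ℝ => Real.log (μ {ω | G ω < t}).toReal / Real.log t)
      (nhdsWithin 0 (Ioi 0)) (nhds κG))
    (hHtail : ∃ γ : ℝ, 0 < γ ∧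
      limsup (fun x : ℝ => (μ {ω | x ≤ H ω}).toReal * Real.exp (γ * x)) atTop ≤ 1)
    (hGtail : ∃ γ : ℝ, 0 < γ ∧
      limsup (fun x : ℝ => (μ {ω | x ≤ G ω}).toReal * Real.exp (γ * x)) atTop ≤ 1)
    (d : ℝ) (hd : 0 < d) :
    Tendsto (fun s : ℝ =>
      Real.log (μ {ω |
        0 ≤ -Real.log (H ω) / Real.log s ∧
        0 ≤ -Real.log (G ω) / Real.log s ∧
        d ≤ κH * (-Real.log (H ω) / Real.log s) + κG * (-Real.log (G ω) / Real.log s)}).toReal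
      / Real.log s) atTop (nhds (-d)) := by
  clear hHtail hGtail hHmeas hGmeas
  rw [Metric.tendsto_nhds]
  intro ε hε
  set e := ε / 2 with he
  have he0 : 0 < e := by positivity
  set r := (1/2 : ℝ) * min 1 (e / (4 * d)) with hrdef
  have hmin0 : 0 < min 1 (e / (4 * d)) := lt_min one_pos (by positivity)
  have hr0 : 0 < r := by positivity
  have hr1 : r < 1 := by
    have h1 : min 1 (e / (4 * d)) ≤ 1 := min_le_left _ _
    rw [hrdef]; nlinarith
  have hrd : d * r ≤ e / 8 := by
    have h1 : min 1 (e / (4 * d)) ≤ e / (4 * d) := min_le_right _ _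
    have h2 : d * r ≤ d * ((1/2) * (e / (4 * d))) := by
      rw [hrdef]; nlinarith
    calc d * r ≤ d * ((1/2) * (e / (4 * d))) := h2
      _ = e / 8 := by field_simp; ring
  obtain ⟨t0H, ht0H0, ht0H1, hbH⟩ :=
    aux_bounds μ H κH (κH * r) (by positivity) (by nlinarith) hH
  obtain ⟨t0G, ht0G0, ht0G1, hbG⟩ :=
    aux_bounds μ G κG (κG * r) (by positivity) (by nlinarith) hG
  have hzH : μ {ω | H ω = 0} = 0 :=
    aux_zero μ H κH (κH * r) t0H (by positivity) (by nlinarith) ht0H0 (fun t h1 h2 => (hbH t h1 h2).2)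
  have hzG : μ {ω | G ω = 0} = 0 :=
    aux_zero μ G κG (κG * r) t0G (by positivity) (by nlinarith) ht0G0 (fun t h1 h2 => (hbG t h1 h2).2)
  set m := max 3 ⌈8 * d / e⌉₊ with hmdef
  have hm3 : 3 ≤ m := le_max_left _ _
  have hm0 : (0:ℝ) < (m:ℝ) := by
    have h1 : 0 < m := by omega
    exact_mod_cast h1
  set δ := d / (m:ℝ) with hδdef
  have hδ0 : 0 < δ := div_pos hd hm0
  have hmd : (m:ℝ) * δ = d := by rw [hδdef]; field_simp
  have hδe : δ ≤ e / 8 := by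
    have h1 : (8 * d / e : ℝ) ≤ (⌈8 * d / e⌉₊ : ℝ) := Nat.le_ceil _
    have h2 : ((⌈8 * d / e⌉₊ : ℕ) : ℝ) ≤ (m:ℝ) := by exact_mod_cast le_max_right 3 _
    rw [hδdef, div_le_div_iff₀ hm0 (by norm_num : (0:ℝ) < 8)]
    have h3 : 8 * d / e ≤ (m:ℝ) := le_trans h1 h2
    rw [div_le_iff₀ he0] at h3
    nlinarith
  have hδd : δ ≤ d := by
    rw [hδdef]
    apply div_le_self hd.le
    exact_mod_cast (by omega : 1 ≤ m)
  set a := d / κH with hadef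
  have ha0 : 0 < a := div_pos hd hκH
  have haκ : a * κH = d := by rw [hadef]; field_simp
  set ε0 := t0G / 2 with hε0def
  have hε00 : 0 < ε0 := by rw [hε0def]; linarith
  have hε0t : ε0 < t0G := by rw [hε0def]; linarith
  have hε01 : ε0 < 1 := by rw [hε0def]; linarith
  set c0 := ε0 ^ (κG + κG * r) with hc0def
  have hc00 : 0 < c0 := Real.rpow_pos_of_pos hε00 _
  have hc0big : c0 ≤ (μ {ω | G ω < ε0}).toReal := by
    rw [hc0def]; exact (hbG ε0 hε00 hε0t).1
  clear_value e r m δ a ε0 c0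
  clear hH hG hrdef hmdef hδdef hadef hε0def hc0def hmin0
  -- eventual facts
  have ev2 : ∀ᶠ s : ℝ in atTop, 2 * s ^ (-(δ / κH)) < t0H := by
    have h := (tendsto_rpow_neg_atTop (div_pos hδ0 hκH)).const_mul (2:ℝ)
    rw [mul_zero] at h
    exact h.eventually_lt_const ht0H0
  have ev3 : ∀ᶠ s : ℝ in atTop, 2 * s ^ (-(δ / κG)) < t0G := by
    have h := (tendsto_rpow_neg_atTop (div_pos hδ0 hκG)).const_mul (2:ℝ)
    rw [mul_zero] at h
    exact h.eventually_lt_const ht0G0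
  have ev4 : ∀ᶠ s : ℝ in atTop, s ^ (-a) < t0H :=
    (tendsto_rpow_neg_atTop ha0).eventually_lt_const ht0H0
  have ev5 : ∀ᶠ s : ℝ in atTop, -(e/2) * Real.log s ≤ Real.log c0 := by
    filter_upwards [Real.tendsto_log_atTop.eventually_ge_atTop
      (max 0 ((2/e) * (-Real.log c0)))] with s hs
    have hs' : (2/e) * (-Real.log c0) ≤ Real.log s := le_trans (le_max_right _ _) hs
    have hs0' : (0:ℝ) ≤ Real.log s := le_trans (le_max_left _ _) hs
    have hnn : (0:ℝ) ≤ (e/2) * Real.log s := mul_nonneg (by positivity) hs0'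
    rcases le_or_gt (-Real.log c0) 0 with h | h
    · linarith
    · have h2 := mul_le_mul_of_nonneg_left hs' (by positivity : (0:ℝ) ≤ e/2)
      have h3 : (e/2) * ((2/e) * (-Real.log c0)) = -Real.log c0 := by field_simp
      rw [h3] at h2
      linarith
  have ev6 : ∀ᶠ s : ℝ in atTop,
      Real.log (((m:ℝ)+1) * ((2:ℝ) ^ κH * (2:ℝ) ^ κG)) ≤ (e/4) * Real.log s := by
    filter_upwards [Real.tendsto_log_atTop.eventually_ge_atTop
      (max 0 ((4/e) * Real.log (((m:ℝ)+1) * ((2:ℝ) ^ κH * (2:ℝ) ^ κG))))] with s hs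
    have hs' : (4/e) * Real.log (((m:ℝ)+1) * ((2:ℝ) ^ κH * (2:ℝ) ^ κG)) ≤ Real.log s :=
      le_trans (le_max_right _ _) hs
    have hs0' : (0:ℝ) ≤ Real.log s := le_trans (le_max_left _ _) hs
    have hnn : (0:ℝ) ≤ (e/4) * Real.log s := mul_nonneg (by positivity) hs0'
    rcases le_or_gt (Real.log (((m:ℝ)+1) * ((2:ℝ) ^ κH * (2:ℝ) ^ κG))) 0 with h | h
    · linarith
    · have h2 := mul_le_mul_of_nonneg_left hs' (by positivity : (0:ℝ) ≤ e/4)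
      have h3 : (e/4) * ((4/e) * Real.log (((m:ℝ)+1) * ((2:ℝ) ^ κH * (2:ℝ) ^ κG)))
          = Real.log (((m:ℝ)+1) * ((2:ℝ) ^ κH * (2:ℝ) ^ κG)) := by
        field_simp
      rw [h3] at h2
      linarith
  filter_upwards [eventually_gt_atTop (1:ℝ), ev2, ev3, ev4, ev5, ev6]
    with s hs1 hs2 hs3 hs4 hs5 hs6
  have hs0 : (0:ℝ) < s := lt_trans one_pos hs1
  have hL : 0 < Real.log s := Real.log_pos hs1
  have hlow := aux_lower μ H G hHnonneg hGnonneg hindep κH κG d e a r ε0 c0 t0H s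
    hκH hκG hd he0 hr0 hrd haκ ha0 (fun t u1 u2 => (hbH t u1 u2).1) hε00 hε01
    hc0big hc00 hzH hzG hs1 hs4 hs5
  have hup := aux_upper μ H G hHnonneg hGnonneg hindep κH κG d r δ t0H t0G s m
    hκH hκG hd hr0 hr1 hm3 hδ0 hmd (fun t u1 u2 => (hbH t u1 u2).2)
    (fun t u1 u2 => (hbG t u1 u2).2) hs1 hs2 hs3
  set Q := (μ {ω |
        0 ≤ -Real.log (H ω) / Real.log s ∧
        0 ≤ -Real.log (G ω) / Real.log s ∧
        d ≤ κH * (-Real.log (H ω) / Real.log s)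
          + κG * (-Real.log (G ω) / Real.log s)}).toReal with hQdef
  have hE0 : 0 < Q := lt_of_lt_of_le (Real.rpow_pos_of_pos hs0 _) hlow
  have hup2 : Q ≤ ((m:ℝ)+1) * ((2:ℝ) ^ κH * (2:ℝ) ^ κG) * s ^ (-d + e/4) := by
    refine le_trans hup ?_
    have hexp : -(d - δ) * (1 - r) ≤ -d + e/4 := by
      have hδr : 0 ≤ δ * r := mul_nonneg hδ0.le hr0.le
      have heq : -(d - δ) * (1 - r) = -d + δ + d * r - δ * r := by ring
      rw [heq]
      linarith only [hδe, hrd, hδr]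
    have h7 := Real.rpow_le_rpow_of_exponent_le hs1.le hexp
    have h8 : (0:ℝ) ≤ ((m:ℝ)+1) * ((2:ℝ) ^ κH * (2:ℝ) ^ κG) := by positivity
    exact mul_le_mul_of_nonneg_left h7 h8
  have hlog1 : (-d - e) * Real.log s ≤ Real.log Q := by
    have h1 := Real.log_le_log (Real.rpow_pos_of_pos hs0 (-(d+e))) hlow
    rw [Real.log_rpow hs0] at h1
    linarith only [h1]
  have hlog2 : Real.log Q ≤ (-d + e) * Real.log s := by
    have h1 := Real.log_le_log hE0 hup2
    rw [Real.log_mul (by positivity) (Real.rpow_pos_of_pos hs0 (-d + e/4)).ne',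
      Real.log_rpow hs0] at h1
    linarith only [h1, hs6, mul_nonneg he0.le hL.le]
  rw [Real.dist_eq]
  have hd1 : -d - e ≤ Real.log Q / Real.log s := (le_div_iff₀ hL).mpr hlog1
  have hd2 : Real.log Q / Real.log s ≤ -d + e := (div_le_iff₀ hL).mpr hlog2
  have habs : |Real.log Q / Real.log s - (-d)| ≤ e :=
    abs_le.mpr ⟨by linarith, by linarith⟩
  calc |Real.log Q / Real.log s - (-d)| ≤ e := habs
    _ < ε := by rw [he]; linarith
end

section
/- Let 2/3 ≤ α ≤ 1 and 0 ≤ d ≤ 1 − α. Then the optimized symmetric Han–Kobayashi multiplexing gain satisfies r_HK(α,d) = 1 − α/2 − d, and this value is attained at the power split v = α, i.e. r(α) = 1 − α/2 − d. -/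
/-- The no-outage triangle `S_d = {(x,y) : x ≥ 0, y ≥ 0, x + y ≤ d}`. -/
def Sd (d : ℝ) : Set (ℝ × ℝ) := {p : ℝ × ℝ | 0 ≤ p.1 ∧ 0 ≤ p.2 ∧ p.1 + p.2 ≤ d}

/-- Compound constraint `a₁(v) = inf_{(x,y)∈S_d} (1 - x - v - (α - v - y)⁺)⁺`. -/
noncomputable def a1 (α d v : ℝ) : ℝ :=
  sInf {z : ℝ | ∃ p ∈ Sd d, z = max (1 - p.1 - v - max (α - v - p.2) 0) 0}

/-- Compound constraint `a₂(v) = inf_{(x,y)∈S_d} (1 - x - (α - v - y)⁺)⁺`. -/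
noncomputable def a2 (α d v : ℝ) : ℝ :=
  sInf {z : ℝ | ∃ p ∈ Sd d, z = max (1 - p.1 - max (α - v - p.2) 0) 0}

/-- Compound constraint `a₃(v) = inf_{(x,y)∈S_d} (max(1 - x - v, α - y) - (α - v - y)⁺)⁺`. -/
noncomputable def a3 (α d v : ℝ) : ℝ :=
  sInf {z : ℝ | ∃ p ∈ Sd d, z = max (max (1 - p.1 - v) (α - p.2) - max (α - v - p.2) 0) 0}

/-- Compound constraint `a₄(v) = inf_{(x,y)∈S_d} (max(1 - x, α - y) - (α - v - y)⁺)⁺`. -/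
noncomputable def a4 (α d v : ℝ) : ℝ :=
  sInf {z : ℝ | ∃ p ∈ Sd d, z = max (max (1 - p.1) (α - p.2) - max (α - v - p.2) 0) 0}

/-- Symmetric Han–Kobayashi multiplexing gain with power split `v`:
`r(v) = min{a₂, (a₁+a₄)/2, a₃, (a₁+a₃+a₄)/3}`. -/
noncomputable def rHKsplit (α d v : ℝ) : ℝ :=
  min (a2 α d v)
    (min ((a1 α d v + a4 α d v) / 2)
      (min (a3 α d v) ((a1 α d v + a3 α d v + a4 α d v) / 3)))

/-- Optimized symmetric Han–Kobayashi multiplexing gain `r_HK(α,d) = sup_{v ≥ 0} r(v)`. -/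
noncomputable def rHK (α d : ℝ) : ℝ := sSup {z : ℝ | ∃ v : ℝ, 0 ≤ v ∧ z = rHKsplit α d v}

section aux

variable {α d v : ℝ}

lemma mem_Sd_d0 (hd₁ : 0 ≤ d) : ((d, 0) : ℝ × ℝ) ∈ Sd d := ⟨hd₁, le_refl 0, by simp⟩

lemma mem_Sd_0d (hd₁ : 0 ≤ d) : ((0, d) : ℝ × ℝ) ∈ Sd d := ⟨le_refl 0, hd₁, by simp⟩

lemma bdd1 : BddBelow {z : ℝ | ∃ p ∈ Sd d, z = max (1 - p.1 - v - max (α - v - p.2) 0) 0} :=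
  ⟨0, by rintro z ⟨p, hp, rfl⟩; exact le_max_right _ _⟩

lemma bdd2 : BddBelow {z : ℝ | ∃ p ∈ Sd d, z = max (1 - p.1 - max (α - v - p.2) 0) 0} :=
  ⟨0, by rintro z ⟨p, hp, rfl⟩; exact le_max_right _ _⟩

lemma bdd3 : BddBelow
    {z : ℝ | ∃ p ∈ Sd d, z = max (max (1 - p.1 - v) (α - p.2) - max (α - v - p.2) 0) 0} :=
  ⟨0, by rintro z ⟨p, hp, rfl⟩; exact le_max_right _ _⟩

lemma bdd4 : BddBelow
    {z : ℝ | ∃ p ∈ Sd d, z = max (max (1 - p.1) (α - p.2) - max (α - v - p.2) 0) 0} :=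
  ⟨0, by rintro z ⟨p, hp, rfl⟩; exact le_max_right _ _⟩

/-- Upper bound on `a₁(v)` for every `v`, via the point `(d,0)`. -/
lemma a1_le (hα₂ : α ≤ 1) (hd₁ : 0 ≤ d) (hd₂ : d ≤ 1 - α) : a1 α d v ≤ 1 - α - d := by
  have h : a1 α d v ≤ max (1 - d - v - max (α - v - 0) 0) 0 :=
    csInf_le bdd1 ⟨(d, 0), mem_Sd_d0 hd₁, rfl⟩
  refine h.trans (max_le ?_ (by linarith))
  have := le_max_left (α - v - 0) 0
  linarith

/-- Upper bound on `a₄(v)` for every `v`, via the point `(d,0)`. -/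
lemma a4_le (hα₁ : 2/3 ≤ α) (hα₂ : α ≤ 1) (hd₁ : 0 ≤ d) (hd₂ : d ≤ 1 - α) : a4 α d v ≤ 1 - d := by
  have h : a4 α d v ≤ max (max (1 - d) (α - 0) - max (α - v - 0) 0) 0 :=
    csInf_le bdd4 ⟨(d, 0), mem_Sd_d0 hd₁, rfl⟩
  refine h.trans (max_le ?_ (by linarith))
  have h1 : max (1 - d) (α - 0) = 1 - d := max_eq_left (by linarith)
  have h2 := le_max_right (α - v - 0) (0 : ℝ)
  linarith [h1 ▸ (le_refl (max (1 - d) (α - 0))), h2]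

lemma a1_at (hα₂ : α ≤ 1) (hd₁ : 0 ≤ d) (hd₂ : d ≤ 1 - α) : a1 α d α = 1 - α - d := by
  refine le_antisymm ?_ ?_
  · refine csInf_le bdd1 ⟨(d, 0), mem_Sd_d0 hd₁, ?_⟩
    have h0 : max (α - α - (0:ℝ)) 0 = 0 := by rw [max_eq_right]; linarith
    rw [h0, show (1:ℝ) - d - α - 0 = 1 - α - d by ring, max_eq_left (by linarith)]
  · refine le_csInf ⟨_, ⟨(d, 0), mem_Sd_d0 hd₁, rfl⟩⟩ ?_
    rintro z ⟨⟨x, y⟩, ⟨hx, hy, hxy⟩, rfl⟩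
    simp only
    have h0 : (0:ℝ) ≤ max (α - α - y) 0 := le_max_right _ _
    have h1 : 1 - x - α - max (α - α - y) 0 ≤ max (1 - x - α - max (α - α - y) 0) 0 :=
      le_max_left _ _
    have h2 : max (α - α - y) 0 = 0 := max_eq_right (by linarith)
    rw [h2] at h1
    linarith [le_max_left (1 - x - α - max (α - α - y) 0) (0:ℝ),
      (max_eq_right (show α - α - y ≤ 0 by linarith) : max (α - α - y) 0 = 0)]

lemma a2_at (hα₁ : 2/3 ≤ α) (hα₂ : α ≤ 1) (hd₁ : 0 ≤ d) (hd₂ : d ≤ 1 - α) : a2 α d α = 1 - d := by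
  refine le_antisymm ?_ ?_
  · refine csInf_le bdd2 ⟨(d, 0), mem_Sd_d0 hd₁, ?_⟩
    have h0 : max (α - α - (0:ℝ)) 0 = 0 := by rw [max_eq_right]; linarith
    rw [h0, show (1:ℝ) - d - 0 = 1 - d by ring, max_eq_left (by linarith)]
  · refine le_csInf ⟨_, ⟨(d, 0), mem_Sd_d0 hd₁, rfl⟩⟩ ?_
    rintro z ⟨⟨x, y⟩, ⟨hx, hy, hxy⟩, rfl⟩
    simp only
    have h2 : max (α - α - y) 0 = 0 := max_eq_right (by linarith)
    rw [h2]
    have := le_max_left (1 - x - 0) (0:ℝ)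
    linarith

lemma a3_at (hα₁ : 2/3 ≤ α) (hα₂ : α ≤ 1) (hd₁ : 0 ≤ d) (hd₂ : d ≤ 1 - α) :
    a3 α d α = α - d := by
  refine le_antisymm ?_ ?_
  · refine csInf_le bdd3 ⟨(0, d), mem_Sd_0d hd₁, ?_⟩
    have h0 : max (α - α - d) 0 = 0 := max_eq_right (by linarith)
    have h1 : max (1 - 0 - α) (α - d) = α - d := max_eq_right (by linarith)
    rw [h0, h1, sub_zero, max_eq_left (by linarith)]
  · refine le_csInf ⟨_, ⟨(0, d), mem_Sd_0d hd₁, rfl⟩⟩ ?_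
    rintro z ⟨⟨x, y⟩, ⟨hx, hy, hxy⟩, rfl⟩
    simp only
    have h2 : max (α - α - y) 0 = 0 := max_eq_right (by linarith)
    rw [h2, sub_zero]
    have h3 : α - y ≤ max (1 - x - α) (α - y) := le_max_right _ _
    have h4 : max (1 - x - α) (α - y) ≤ max (max (1 - x - α) (α - y)) 0 := le_max_left _ _
    linarith

lemma a4_at (hα₁ : 2/3 ≤ α) (hα₂ : α ≤ 1) (hd₁ : 0 ≤ d) (hd₂ : d ≤ 1 - α) : a4 α d α = 1 - d := by
  refine le_antisymm ?_ ?_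
  · refine csInf_le bdd4 ⟨(d, 0), mem_Sd_d0 hd₁, ?_⟩
    have h0 : max (α - α - (0:ℝ)) 0 = 0 := max_eq_right (by linarith)
    have h1 : max (1 - d) (α - 0) = 1 - d := max_eq_left (by linarith)
    rw [h0, h1, sub_zero, max_eq_left (by linarith)]
  · refine le_csInf ⟨_, ⟨(d, 0), mem_Sd_d0 hd₁, rfl⟩⟩ ?_
    rintro z ⟨⟨x, y⟩, ⟨hx, hy, hxy⟩, rfl⟩
    simp only
    have h2 : max (α - α - y) 0 = 0 := max_eq_right (by linarith)
    rw [h2, sub_zero]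
    have h3 : 1 - x ≤ max (1 - x) (α - y) := le_max_left _ _
    have h4 : max (1 - x) (α - y) ≤ max (max (1 - x) (α - y)) 0 := le_max_left _ _
    linarith

lemma rHKsplit_le (hα₁ : 2/3 ≤ α) (hα₂ : α ≤ 1) (hd₁ : 0 ≤ d) (hd₂ : d ≤ 1 - α) :
    rHKsplit α d v ≤ 1 - α/2 - d := by
  have h1 := a1_le (α := α) (d := d) (v := v) hα₂ hd₁ hd₂
  have h4 := a4_le (α := α) (d := d) (v := v) hα₁ hα₂ hd₁ hd₂
  have : rHKsplit α d v ≤ (a1 α d v + a4 α d v) / 2 :=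
    (min_le_right _ _).trans (min_le_left _ _)
  linarith

end aux

/-- For `2/3 ≤ α ≤ 1` and `0 ≤ d ≤ 1 - α`,
`r_HK(α,d) = 1 - α/2 - d`, attained at the power split `v = α`. -/
theorem stmt_5 (α d : ℝ) (hα₁ : 2/3 ≤ α) (hα₂ : α ≤ 1) (hd₁ : 0 ≤ d) (hd₂ : d ≤ 1 - α) :
    rHK α d = 1 - α/2 - d ∧ rHKsplit α d α = 1 - α/2 - d := by
  have hsplit : rHKsplit α d α = 1 - α/2 - d := by
    rw [rHKsplit, a1_at hα₂ hd₁ hd₂, a2_at hα₁ hα₂ hd₁ hd₂, a3_at hα₁ hα₂ hd₁ hd₂,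
      a4_at hα₁ hα₂ hd₁ hd₂]
    rw [min_eq_right (show (1 - α - d + (α - d) + (1 - d))/3 ≤ α - d by linarith)]
    rw [min_eq_left (show (1 - α - d + (1 - d))/2 ≤ (1 - α - d + (α - d) + (1 - d))/3 by
      linarith)]
    rw [min_eq_right (show (1 - α - d + (1 - d))/2 ≤ 1 - d by linarith)]
    ring
  refine ⟨?_, hsplit⟩
  rw [rHK]
  refine le_antisymm ?_ ?_
  · refine csSup_le ⟨_, α, by linarith, rfl⟩ ?_
    rintro z ⟨v, hv, rfl⟩
    exact rHKsplit_le hα₁ hα₂ hd₁ hd₂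
  · refine le_csSup ⟨1 - α/2 - d, ?_⟩ ⟨α, by linarith, hsplit.symm⟩
    rintro z ⟨v, hv, rfl⟩
    exact rHKsplit_le hα₁ hα₂ hd₁ hd₂
end

section
/- Let 0 ≤ α ≤ 5/8 and 1 − 7α/5 ≤ d ≤ 1 − α. Then the optimized symmetric Han–Kobayashi multiplexing gain satisfies r_HK(α,d) = (3 − α − 3d)/4, and this value is attained at the power split v = (3α + d − 1)/2, i.e. r((3α + d − 1)/2) = (3 − α − 3d)/4. -/
lemma mem_Sd {d x y : ℝ} (hx : 0 ≤ x) (hy : 0 ≤ y) (hxy : x + y ≤ d) : (x, y) ∈ Sd d :=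
  ⟨hx, hy, hxy⟩

/- Upper bound lemmas: a single point of the triangle bounds the infimum. -/

lemma a1_le_s8 (α d v x y : ℝ) (hx : 0 ≤ x) (hy : 0 ≤ y) (hxy : x + y ≤ d) :
    a1 α d v ≤ max (1 - x - v - max (α - v - y) 0) 0 := by
  refine csInf_le ⟨0, ?_⟩ ⟨(x, y), mem_Sd hx hy hxy, rfl⟩
  rintro z ⟨q, -, rfl⟩; exact le_max_right _ _

lemma a2_le (α d v x y : ℝ) (hx : 0 ≤ x) (hy : 0 ≤ y) (hxy : x + y ≤ d) :
    a2 α d v ≤ max (1 - x - max (α - v - y) 0) 0 := by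
  refine csInf_le ⟨0, ?_⟩ ⟨(x, y), mem_Sd hx hy hxy, rfl⟩
  rintro z ⟨q, -, rfl⟩; exact le_max_right _ _

lemma a3_le (α d v x y : ℝ) (hx : 0 ≤ x) (hy : 0 ≤ y) (hxy : x + y ≤ d) :
    a3 α d v ≤ max (max (1 - x - v) (α - y) - max (α - v - y) 0) 0 := by
  refine csInf_le ⟨0, ?_⟩ ⟨(x, y), mem_Sd hx hy hxy, rfl⟩
  rintro z ⟨q, -, rfl⟩; exact le_max_right _ _

lemma a4_le_s8 (α d v x y : ℝ) (hx : 0 ≤ x) (hy : 0 ≤ y) (hxy : x + y ≤ d) :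
    a4 α d v ≤ max (max (1 - x) (α - y) - max (α - v - y) 0) 0 := by
  refine csInf_le ⟨0, ?_⟩ ⟨(x, y), mem_Sd hx hy hxy, rfl⟩
  rintro z ⟨q, -, rfl⟩; exact le_max_right _ _

/- Exact values at suitable power splits. -/

lemma a1_val (α d v : ℝ) (hd0 : 0 ≤ d) (hvα : v ≤ α) (h1 : 0 ≤ 1 - α - d) :
    a1 α d v = 1 - α - d := by
  apply IsLeast.csInf_eq
  constructor
  · refine ⟨(d, 0), mem_Sd hd0 le_rfl (by linarith), ?_⟩
    show (1 : ℝ) - α - d = max (1 - d - v - max (α - v - 0) 0) 0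
    rw [max_eq_left (by linarith : (0:ℝ) ≤ α - v - 0),
        max_eq_left (by linarith : (0:ℝ) ≤ 1 - d - v - (α - v - 0))]
    ring
  · rintro z ⟨⟨x, y⟩, hp, rfl⟩
    obtain ⟨hx, hy, hxy⟩ : 0 ≤ x ∧ 0 ≤ y ∧ x + y ≤ d := hp
    show (1 : ℝ) - α - d ≤ max (1 - x - v - max (α - v - y) 0) 0
    refine le_trans ?_ (le_max_left _ _)
    rcases le_or_gt (α - v - y) 0 with h | h
    · rw [max_eq_right h]; linarith
    · rw [max_eq_left h.le]; linarith

lemma a2_val (α d v : ℝ) (hd0 : 0 ≤ d) (hv0 : 0 ≤ v) (hvα : v ≤ α) (h1 : 0 ≤ 1 - α - d) :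
    a2 α d v = 1 - α - d + v := by
  apply IsLeast.csInf_eq
  constructor
  · refine ⟨(d, 0), mem_Sd hd0 le_rfl (by linarith), ?_⟩
    show (1 : ℝ) - α - d + v = max (1 - d - max (α - v - 0) 0) 0
    rw [max_eq_left (by linarith : (0:ℝ) ≤ α - v - 0),
        max_eq_left (by linarith : (0:ℝ) ≤ 1 - d - (α - v - 0))]
    ring
  · rintro z ⟨⟨x, y⟩, hp, rfl⟩
    obtain ⟨hx, hy, hxy⟩ : 0 ≤ x ∧ 0 ≤ y ∧ x + y ≤ d := hp
    show (1 : ℝ) - α - d + v ≤ max (1 - x - max (α - v - y) 0) 0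
    refine le_trans ?_ (le_max_left _ _)
    rcases le_or_gt (α - v - y) 0 with h | h
    · rw [max_eq_right h]; linarith
    · rw [max_eq_left h.le]; linarith

lemma a4_val (α d v : ℝ) (hd0 : 0 ≤ d) (hv0 : 0 ≤ v) (hvα : v ≤ α) (h1 : 0 ≤ 1 - α - d) :
    a4 α d v = 1 - α - d + v := by
  apply IsLeast.csInf_eq
  constructor
  · refine ⟨(d, 0), mem_Sd hd0 le_rfl (by linarith), ?_⟩
    show (1 : ℝ) - α - d + v = max (max (1 - d) (α - 0) - max (α - v - 0) 0) 0
    rw [max_eq_left (by linarith : α - 0 ≤ 1 - d),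
        max_eq_left (by linarith : (0:ℝ) ≤ α - v - 0),
        max_eq_left (by linarith : (0:ℝ) ≤ 1 - d - (α - v - 0))]
    ring
  · rintro z ⟨⟨x, y⟩, hp, rfl⟩
    obtain ⟨hx, hy, hxy⟩ : 0 ≤ x ∧ 0 ≤ y ∧ x + y ≤ d := hp
    show (1 : ℝ) - α - d + v ≤ max (max (1 - x) (α - y) - max (α - v - y) 0) 0
    refine le_trans ?_ (le_max_left _ _)
    have hmx : 1 - x ≤ max (1 - x) (α - y) := le_max_left _ _
    rcases le_or_gt (α - v - y) 0 with h | h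
    · rw [max_eq_right h]; linarith
    · rw [max_eq_left h.le]; linarith

lemma a3_val (α d v : ℝ) (h1 : 1 + α - d ≤ 3 * v) (h2 : v ≤ 1 + d - α)
    (h3 : 1 - α - d ≤ v) (h4 : 0 ≤ 1 + α - d - v) :
    a3 α d v = (1 + α - d - v) / 2 := by
  apply IsLeast.csInf_eq
  constructor
  · refine ⟨((1 + d - v - α) / 2, (d - 1 + v + α) / 2),
      mem_Sd (by linarith) (by linarith) (by linarith), ?_⟩
    show (1 + α - d - v) / 2 =
      max (max (1 - (1 + d - v - α) / 2 - v) (α - (d - 1 + v + α) / 2)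
        - max (α - v - (d - 1 + v + α) / 2) 0) 0
    rw [max_eq_right (by linarith : α - v - (d - 1 + v + α) / 2 ≤ 0),
        max_eq_left (by linarith :
          α - (d - 1 + v + α) / 2 ≤ 1 - (1 + d - v - α) / 2 - v),
        max_eq_left (by linarith : (0:ℝ) ≤ 1 - (1 + d - v - α) / 2 - v - 0)]
    ring
  · rintro z ⟨⟨x, y⟩, hp, rfl⟩
    obtain ⟨hx, hy, hxy⟩ : 0 ≤ x ∧ 0 ≤ y ∧ x + y ≤ d := hp
    show (1 + α - d - v) / 2 ≤ max (max (1 - x - v) (α - y) - max (α - v - y) 0) 0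
    refine le_trans ?_ (le_max_left _ _)
    have hmx : 1 - x - v ≤ max (1 - x - v) (α - y) := le_max_left _ _
    have hmy : α - y ≤ max (1 - x - v) (α - y) := le_max_right _ _
    rcases le_or_gt (α - v - y) 0 with h | h
    · rw [max_eq_right h]; linarith
    · rw [max_eq_left h.le]; linarith

/-- For `0 ≤ α ≤ 5/8` and `1 - 7α/5 ≤ d ≤ 1 - α`,
`r_HK(α,d) = (3 - α - 3d)/4`, attained at the power split `v = (3α + d - 1)/2`. -/
theorem stmt_8 (α d : ℝ) (hα₁ : 0 ≤ α) (hα₂ : α ≤ 5/8)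
    (hd₁ : 1 - 7*α/5 ≤ d) (hd₂ : d ≤ 1 - α) :
    rHK α d = (3 - α - 3*d) / 4 ∧ rHKsplit α d ((3*α + d - 1)/2) = (3 - α - 3*d) / 4 := by
  have hd0 : (0:ℝ) ≤ d := by linarith
  have hsplit : rHKsplit α d ((3*α + d - 1)/2) = (3 - α - 3*d) / 4 := by
    unfold rHKsplit
    rw [a1_val α d ((3*α + d - 1)/2) hd0 (by linarith) (by linarith),
        a2_val α d ((3*α + d - 1)/2) hd0 (by linarith) (by linarith) (by linarith),
        a3_val α d ((3*α + d - 1)/2) (by linarith) (by linarith) (by linarith) (by linarith),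
        a4_val α d ((3*α + d - 1)/2) hd0 (by linarith) (by linarith) (by linarith)]
    apply le_antisymm
    · exact le_trans (le_trans (min_le_right _ _)
        (le_trans (min_le_right _ _) (min_le_left _ _))) (by linarith)
    · exact le_min (by linarith) (le_min (by linarith) (le_min (by linarith) (by linarith)))
  refine ⟨?_, hsplit⟩
  have hub : ∀ w : ℝ, 0 ≤ w → rHKsplit α d w ≤ (3 - α - 3*d) / 4 := by
    intro w hw
    unfold rHKsplit
    rcases le_or_gt w ((3*α + d - 1)/2) with hcase | hcase
    · -- use (a1 + a4)/2
      have h1 : a1 α d w ≤ 1 - α - d := by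
        refine le_trans (a1_le_s8 α d w d 0 hd0 le_rfl (by linarith)) (max_le ?_ (by linarith))
        have := le_max_left (α - w - 0) (0:ℝ); linarith
      have h4 : a4 α d w ≤ 1 - α - d + w := by
        refine le_trans (a4_le_s8 α d w d 0 hd0 le_rfl (by linarith)) (max_le ?_ (by linarith))
        have hM := le_max_left (α - w - 0) (0:ℝ)
        have hN : max (1 - d) (α - 0) ≤ 1 - d := max_le le_rfl (by linarith)
        linarith
      exact le_trans (le_trans (min_le_right _ _) (min_le_left _ _)) (by linarith)
    · rcases le_or_gt w (1 + d - α) with hc2 | hc2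
      · -- use a3 at the balanced point
        have h3 : a3 α d w ≤ (3 - α - 3*d) / 4 := by
          refine le_trans (a3_le α d w ((1 + d - w - α)/2) ((d - 1 + w + α)/2)
            (by linarith) (by linarith) (by linarith)) (max_le ?_ (by linarith))
          have hm : max (1 - (1 + d - w - α)/2 - w) (α - (d - 1 + w + α)/2)
              ≤ (3 - α - 3*d) / 4 := max_le (by linarith) (by linarith)
          have h0 : (0:ℝ) ≤ max (α - w - (d - 1 + w + α)/2) 0 := le_max_right _ _
          linarith
        exact le_trans (le_trans (min_le_right _ _)
          (le_trans (min_le_right _ _) (min_le_left _ _))) h3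
      · -- use a3 at (0, d)
        have h3 : a3 α d w ≤ (3 - α - 3*d) / 4 := by
          refine le_trans (a3_le α d w 0 d le_rfl hd0 (by linarith))
            (max_le ?_ (by linarith))
          have hm : max (1 - 0 - w) (α - d) ≤ (3 - α - 3*d) / 4 :=
            max_le (by linarith) (by linarith)
          have h0 : (0:ℝ) ≤ max (α - w - d) 0 := le_max_right _ _
          linarith
        exact le_trans (le_trans (min_le_right _ _)
          (le_trans (min_le_right _ _) (min_le_left _ _))) h3
  unfold rHK
  apply le_antisymm
  · refine csSup_le ⟨(3 - α - 3*d) / 4, (3*α + d - 1)/2, by linarith, hsplit.symm⟩ ?_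
    rintro z ⟨w, hw, rfl⟩
    exact hub w hw
  · refine le_csSup ⟨(3 - α - 3*d) / 4, ?_⟩ ⟨(3*α + d - 1)/2, by linarith, hsplit.symm⟩
    rintro z ⟨w, hw, rfl⟩
    exact hub w hw
end

section
/- Let 0 ≤ α ≤ 5/8 and max(α − 1/2, 1 − 2α) ≤ d ≤ 1 − 7α/5. Then the optimized symmetric Han–Kobayashi multiplexing gain satisfies r_HK(α,d) = (1 + α − d)/3, and this value is attained at the power split v = (1 + α − d)/3, i.e. r((1 + α − d)/3) = (1 + α − d)/3. -/
lemma aux_bdd (d : ℝ) (f : ℝ × ℝ → ℝ) :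
    BddBelow {z : ℝ | ∃ p ∈ Sd d, z = max (f p) 0} :=
  ⟨0, by rintro z ⟨p, _, rfl⟩; exact le_max_right _ _⟩

lemma aux_le (d : ℝ) (f : ℝ × ℝ → ℝ) {p : ℝ × ℝ} (hp : p ∈ Sd d) {c : ℝ}
    (h : max (f p) 0 ≤ c) :
    sInf {z : ℝ | ∃ p ∈ Sd d, z = max (f p) 0} ≤ c :=
  csInf_le_of_le (aux_bdd d f) ⟨p, hp, rfl⟩ h

lemma aux_ge (d : ℝ) (hd : 0 ≤ d) (f : ℝ × ℝ → ℝ) {c : ℝ}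
    (h : ∀ p ∈ Sd d, c ≤ max (f p) 0) :
    c ≤ sInf {z : ℝ | ∃ p ∈ Sd d, z = max (f p) 0} :=
  le_csInf ⟨_, ⟨(0, 0), ⟨le_refl 0, le_refl 0, by simpa using hd⟩, rfl⟩⟩
    (by rintro z ⟨p, hp, rfl⟩; exact h p hp)

/-- For `0 ≤ α ≤ 5/8` and `max(α - 1/2, 1 - 2α) ≤ d ≤ 1 - 7α/5`,
`r_HK(α,d) = (1 + α - d)/3`, attained at the power split `v = (1 + α - d)/3`. -/
theorem stmt_9 (α d : ℝ) (hα₁ : 0 ≤ α) (hα₂ : α ≤ 5/8)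
    (hd₁ : max (α - 1/2) (1 - 2*α) ≤ d) (hd₂ : d ≤ 1 - 7*α/5) :
    rHK α d = (1 + α - d) / 3 ∧ rHKsplit α d ((1 + α - d)/3) = (1 + α - d) / 3 := by
  have hd1a : α - 1/2 ≤ d := le_trans (le_max_left _ _) hd₁
  have hd1b : 1 - 2*α ≤ d := le_trans (le_max_right _ _) hd₁
  set r := (1 + α - d) / 3 with hrdef
  have hr0 : 0 ≤ r := by rw [hrdef]; linarith
  have hrα : r ≤ α := by rw [hrdef]; linarith
  have hA0 : 0 ≤ 1 - d - α := by linarith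
  have hd0 : 0 ≤ d := by linarith
  have hAr : 1 - d - α ≤ r := by rw [hrdef]; linarith
  have hmd0 : ((d : ℝ), (0 : ℝ)) ∈ Sd d := ⟨hd0, le_refl 0, by norm_num⟩
  have hm0d : ((0 : ℝ), (d : ℝ)) ∈ Sd d := ⟨le_refl 0, hd0, by norm_num⟩
  -- values of the four constraints at v = r
  have ha1 : a1 α d r = 1 - d - α := by
    unfold a1
    refine le_antisymm ?_ ?_
    · refine aux_le d _ hmd0 ?_
      show max (1 - d - r - max (α - r - 0) 0) 0 ≤ 1 - d - α
      rw [sub_zero, max_eq_left (by linarith : (0:ℝ) ≤ α - r)]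
      exact max_le (by linarith) hA0
    · refine aux_ge d hd0 _ ?_
      rintro ⟨x, y⟩ ⟨hx, hy, hxy⟩
      show 1 - d - α ≤ max (1 - x - r - max (α - r - y) 0) 0
      rcases le_total (α - r - y) 0 with h | h
      · rw [max_eq_right h]
        exact le_trans (by linarith) (le_max_left _ _)
      · rw [max_eq_left h]
        exact le_trans (by linarith) (le_max_left _ _)
  have ha2 : a2 α d r = 1 - d - α + r := by
    unfold a2
    refine le_antisymm ?_ ?_
    · refine aux_le d _ hmd0 ?_
      show max (1 - d - max (α - r - 0) 0) 0 ≤ 1 - d - α + r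
      rw [sub_zero, max_eq_left (by linarith : (0:ℝ) ≤ α - r)]
      exact max_le (by linarith) (by linarith)
    · refine aux_ge d hd0 _ ?_
      rintro ⟨x, y⟩ ⟨hx, hy, hxy⟩
      show 1 - d - α + r ≤ max (1 - x - max (α - r - y) 0) 0
      rcases le_total (α - r - y) 0 with h | h
      · rw [max_eq_right h]
        exact le_trans (by linarith) (le_max_left _ _)
      · rw [max_eq_left h]
        exact le_trans (by linarith) (le_max_left _ _)
  have ha3 : a3 α d r = r := by
    unfold a3
    refine le_antisymm ?_ ?_
    · refine aux_le d _ hmd0 ?_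
      show max (max (1 - d - r) (α - 0) - max (α - r - 0) 0) 0 ≤ r
      rw [sub_zero, sub_zero, max_eq_left (by linarith : (0:ℝ) ≤ α - r)]
      have hmx := max_le (show 1 - d - r ≤ α - r + r by linarith)
        (show α ≤ α - r + r by linarith)
      exact max_le (by linarith) hr0
    · refine aux_ge d hd0 _ ?_
      rintro ⟨x, y⟩ ⟨hx, hy, hxy⟩
      show r ≤ max (max (1 - x - r) (α - y) - max (α - r - y) 0) 0
      rcases le_total (α - r - y) 0 with h | h
      · rw [max_eq_right h, sub_zero]
        refine le_trans ?_ (le_max_left _ _)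
        rcases le_total r (α - y) with h2 | h2
        · exact le_trans h2 (le_max_right _ _)
        · exact le_trans (by linarith) (le_max_left _ _)
      · rw [max_eq_left h]
        refine le_trans ?_ (le_max_left _ _)
        have := le_max_right (1 - x - r) (α - y)
        linarith
  have ha4 : a4 α d r = 1 - d - α + r := by
    unfold a4
    refine le_antisymm ?_ ?_
    · refine aux_le d _ hmd0 ?_
      show max (max (1 - d) (α - 0) - max (α - r - 0) 0) 0 ≤ 1 - d - α + r
      rw [sub_zero, sub_zero, max_eq_left (by linarith : (0:ℝ) ≤ α - r)]
      have hmx := max_le (le_refl (1 - d)) (show α ≤ 1 - d by linarith)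
      exact max_le (by linarith) (by linarith)
    · refine aux_ge d hd0 _ ?_
      rintro ⟨x, y⟩ ⟨hx, hy, hxy⟩
      show 1 - d - α + r ≤ max (max (1 - x) (α - y) - max (α - r - y) 0) 0
      rcases le_total (α - r - y) 0 with h | h
      · rw [max_eq_right h, sub_zero]
        refine le_trans ?_ (le_max_left _ _)
        exact le_trans (by linarith) (le_max_left _ _)
      · rw [max_eq_left h]
        refine le_trans ?_ (le_max_left _ _)
        have := le_max_left (1 - x) (α - y)
        linarith
  have hsplit : rHKsplit α d r = r := by
    unfold rHKsplit
    rw [ha1, ha2, ha3, ha4]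
    have h2A : r / 2 ≤ 1 - d - α := by rw [hrdef]; linarith
    rw [min_eq_left (show r ≤ (1 - d - α + r + (1 - d - α + r)) / 3 by linarith),
      min_eq_right (show r ≤ (1 - d - α + (1 - d - α + r)) / 2 by linarith),
      min_eq_right (show r ≤ 1 - d - α + r by linarith)]
  -- upper bound for all v ≥ 0
  have hub : ∀ v : ℝ, 0 ≤ v → rHKsplit α d v ≤ r := by
    intro v hv
    have h3 : a3 α d v ≤ r := by
      unfold a3
      rcases le_total v r with hvr | hvr
      · refine aux_le d _ hmd0 ?_
        show max (max (1 - d - v) (α - 0) - max (α - v - 0) 0) 0 ≤ r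
        rw [sub_zero, sub_zero, max_eq_left (by linarith : (0:ℝ) ≤ α - v)]
        have hmx := max_le (show 1 - d - v ≤ α - v + r by linarith)
          (show α ≤ α - v + r by linarith)
        exact max_le (by linarith) hr0
      · rcases le_total v (1 + d - α) with hv2 | hv2
        · set y := (α + d + v - 1) / 2 with hy
          have hy0 : 0 ≤ y := by rw [hy]; linarith
          have hyd : y ≤ d := by rw [hy]; linarith
          refine aux_le d _ (p := (d - y, y)) ⟨by show (0:ℝ) ≤ d - y; linarith, hy0,
            by show d - y + y ≤ d; linarith⟩ ?_
          show max (max (1 - (d - y) - v) (α - y) - max (α - v - y) 0) 0 ≤ r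
          rw [max_eq_right (show α - v - y ≤ 0 by rw [hy]; linarith), sub_zero]
          refine max_le (max_le ?_ ?_) hr0
          · rw [hy]; linarith
          · rw [hy]; linarith
        · refine aux_le d _ hm0d ?_
          show max (max (1 - 0 - v) (α - d) - max (α - v - d) 0) 0 ≤ r
          rw [max_eq_right (show α - v - d ≤ 0 by linarith), sub_zero]
          exact max_le (max_le (by linarith) (by linarith)) hr0
    have hmin : rHKsplit α d v ≤ a3 α d v := by
      unfold rHKsplit
      exact le_trans (min_le_right _ _) (le_trans (min_le_right _ _) (min_le_left _ _))
    linarith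
  refine ⟨?_, hsplit⟩
  unfold rHK
  have hmem : r ∈ {z : ℝ | ∃ v : ℝ, 0 ≤ v ∧ z = rHKsplit α d v} := ⟨r, hr0, hsplit.symm⟩
  have hub' : ∀ z ∈ {z : ℝ | ∃ v : ℝ, 0 ≤ v ∧ z = rHKsplit α d v}, z ≤ r := by
    rintro z ⟨v, hv, rfl⟩
    exact hub v hv
  exact le_antisymm (csSup_le ⟨r, hmem⟩ hub') (le_csSup ⟨r, hub'⟩ hmem)
end

section
/- Let 0 ≤ α ≤ 5/8 and 0 ≤ d ≤ max(α − 1/2, 1 − 2α). Then the optimized symmetric Han–Kobayashi multiplexing gain satisfies r_HK(α,d) = max(α − d, 1 − α − d), and this value is attained at the power split v = α, i.e. r(α) = max(α − d, 1 − α − d). -/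
lemma a1_le_point (α d v : ℝ) (p : ℝ × ℝ) (hp : p ∈ Sd d) :
    a1 α d v ≤ max (1 - p.1 - v - max (α - v - p.2) 0) 0 := by
  apply csInf_le
  · exact ⟨0, by rintro z ⟨q, hq, rfl⟩; exact le_max_right _ _⟩
  · exact ⟨p, hp, rfl⟩

lemma a2_le_point (α d v : ℝ) (p : ℝ × ℝ) (hp : p ∈ Sd d) :
    a2 α d v ≤ max (1 - p.1 - max (α - v - p.2) 0) 0 := by
  apply csInf_le
  · exact ⟨0, by rintro z ⟨q, hq, rfl⟩; exact le_max_right _ _⟩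
  · exact ⟨p, hp, rfl⟩

lemma a3_le_point (α d v : ℝ) (p : ℝ × ℝ) (hp : p ∈ Sd d) :
    a3 α d v ≤ max (max (1 - p.1 - v) (α - p.2) - max (α - v - p.2) 0) 0 := by
  apply csInf_le
  · exact ⟨0, by rintro z ⟨q, hq, rfl⟩; exact le_max_right _ _⟩
  · exact ⟨p, hp, rfl⟩

lemma a4_le_point (α d v : ℝ) (p : ℝ × ℝ) (hp : p ∈ Sd d) :
    a4 α d v ≤ max (max (1 - p.1) (α - p.2) - max (α - v - p.2) 0) 0 := by
  apply csInf_le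
  · exact ⟨0, by rintro z ⟨q, hq, rfl⟩; exact le_max_right _ _⟩
  · exact ⟨p, hp, rfl⟩

lemma Sd_origin {d : ℝ} (hd : 0 ≤ d) : ((0 : ℝ), (0 : ℝ)) ∈ Sd d :=
  ⟨le_rfl, le_rfl, by simpa using hd⟩

lemma a1_ge (α d v c : ℝ) (hd : 0 ≤ d)
    (h : ∀ p ∈ Sd d, c ≤ max (1 - p.1 - v - max (α - v - p.2) 0) 0) : c ≤ a1 α d v := by
  refine le_csInf ⟨_, ⟨((0 : ℝ), (0 : ℝ)), Sd_origin hd, rfl⟩⟩ ?_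
  rintro z ⟨p, hp, rfl⟩
  exact h p hp

lemma a2_ge (α d v c : ℝ) (hd : 0 ≤ d)
    (h : ∀ p ∈ Sd d, c ≤ max (1 - p.1 - max (α - v - p.2) 0) 0) : c ≤ a2 α d v := by
  refine le_csInf ⟨_, ⟨((0 : ℝ), (0 : ℝ)), Sd_origin hd, rfl⟩⟩ ?_
  rintro z ⟨p, hp, rfl⟩
  exact h p hp

lemma a3_ge (α d v c : ℝ) (hd : 0 ≤ d)
    (h : ∀ p ∈ Sd d, c ≤ max (max (1 - p.1 - v) (α - p.2) - max (α - v - p.2) 0) 0) :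
    c ≤ a3 α d v := by
  refine le_csInf ⟨_, ⟨((0 : ℝ), (0 : ℝ)), Sd_origin hd, rfl⟩⟩ ?_
  rintro z ⟨p, hp, rfl⟩
  exact h p hp

lemma a4_ge (α d v c : ℝ) (hd : 0 ≤ d)
    (h : ∀ p ∈ Sd d, c ≤ max (max (1 - p.1) (α - p.2) - max (α - v - p.2) 0) 0) :
    c ≤ a4 α d v := by
  refine le_csInf ⟨_, ⟨((0 : ℝ), (0 : ℝ)), Sd_origin hd, rfl⟩⟩ ?_
  rintro z ⟨p, hp, rfl⟩
  exact h p hp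

/-- For `0 ≤ α ≤ 5/8` and `0 ≤ d ≤ max(α - 1/2, 1 - 2α)`,
`r_HK(α,d) = max(α - d, 1 - α - d)`, attained at the power split `v = α`. -/
theorem stmt_10 (α d : ℝ) (hα₁ : 0 ≤ α) (hα₂ : α ≤ 5/8)
    (hd₁ : 0 ≤ d) (hd₂ : d ≤ max (α - 1/2) (1 - 2*α)) :
    rHK α d = max (α - d) (1 - α - d) ∧ rHKsplit α d α = max (α - d) (1 - α - d) := by
  set M := max (α - d) (1 - α - d) with hMdef
  have hcase : (α ≤ 1/2 ∧ d ≤ 1 - 2*α) ∨ (1/2 ≤ α ∧ d ≤ α - 1/2) := by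
    rcases le_total α (1/2) with h | h
    · exact Or.inl ⟨h, hd₂.trans (max_le (by linarith) le_rfl)⟩
    · exact Or.inr ⟨h, hd₂.trans (max_le le_rfl (by linarith))⟩
  have h1ad : 0 ≤ 1 - α - d := by rcases hcase with ⟨h, h'⟩ | ⟨h, h'⟩ <;> linarith
  have hM0 : 0 ≤ M := le_trans h1ad (le_max_right _ _)
  have hMge1 : α - d ≤ M := le_max_left _ _
  have hMge2 : 1 - α - d ≤ M := le_max_right _ _
  have hMle : M ≤ 1 - d := max_le (by linarith) (by linarith)
  have hMhalf : M ≤ 1 - α/2 - d := max_le (by linarith) (by linarith)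
  have hd0 : ((d, (0:ℝ)) : ℝ × ℝ) ∈ Sd d := ⟨hd₁, le_rfl, by simp⟩
  have h0d : (((0:ℝ), d) : ℝ × ℝ) ∈ Sd d := ⟨le_rfl, hd₁, by simp⟩
  have eα0 : max (α - α - (0:ℝ)) 0 = 0 := by norm_num
  -- a1 at v = α
  have ha1 : a1 α d α = 1 - α - d := by
    apply le_antisymm
    · refine (a1_le_point α d α (d, 0) hd0).trans_eq ?_
      show max (1 - d - α - max (α - α - 0) 0) 0 = 1 - α - d
      rw [eα0, sub_zero, max_eq_left (by linarith)]
      ring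
    · apply a1_ge α d α _ hd₁
      rintro ⟨x, y⟩ ⟨hx, hy, hxy⟩
      simp only at hx hy hxy ⊢
      have ey : max (α - α - y) 0 = 0 := max_eq_right (by linarith)
      rw [ey, sub_zero]
      exact le_trans (by linarith) (le_max_left _ _)
  -- a2 at v = α
  have ha2 : a2 α d α = 1 - d := by
    apply le_antisymm
    · refine (a2_le_point α d α (d, 0) hd0).trans_eq ?_
      show max (1 - d - max (α - α - 0) 0) 0 = 1 - d
      rw [eα0, sub_zero, max_eq_left (by linarith)]
    · apply a2_ge α d α _ hd₁
      rintro ⟨x, y⟩ ⟨hx, hy, hxy⟩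
      simp only at hx hy hxy ⊢
      have ey : max (α - α - y) 0 = 0 := max_eq_right (by linarith)
      rw [ey, sub_zero]
      exact le_trans (by linarith) (le_max_left _ _)
  -- a3 at v = α
  have ha3 : a3 α d α = M := by
    apply le_antisymm
    · rcases hcase with ⟨h, h'⟩ | ⟨h, h'⟩
      · refine (a3_le_point α d α (d, 0) hd0).trans_eq ?_
        show max (max (1 - d - α) (α - 0) - max (α - α - 0) 0) 0 = M
        rw [eα0, sub_zero, show (α:ℝ) - 0 = α from sub_zero α,
          max_eq_left (show α ≤ 1 - d - α by linarith),
          max_eq_left (show (0:ℝ) ≤ 1 - d - α by linarith), hMdef,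
          max_eq_right (show α - d ≤ 1 - α - d by linarith)]
        ring
      · refine (a3_le_point α d α (0, d) h0d).trans_eq ?_
        show max (max (1 - 0 - α) (α - d) - max (α - α - d) 0) 0 = M
        have ed : max (α - α - d) 0 = 0 := max_eq_right (by linarith)
        rw [ed, sub_zero,
          max_eq_right (show 1 - 0 - α ≤ α - d by linarith),
          max_eq_left (show (0:ℝ) ≤ α - d by linarith), hMdef,
          max_eq_left (show 1 - α - d ≤ α - d by linarith)]
    · apply a3_ge α d α _ hd₁
      rintro ⟨x, y⟩ ⟨hx, hy, hxy⟩
      simp only at hx hy hxy ⊢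
      have ey : max (α - α - y) 0 = 0 := max_eq_right (by linarith)
      rw [ey, sub_zero]
      apply max_le
      · exact le_trans (by linarith : α - d ≤ α - y) ((le_max_right _ _).trans (le_max_left _ _))
      · exact le_trans (by linarith : 1 - α - d ≤ 1 - x - α)
          ((le_max_left _ _).trans (le_max_left _ _))
  -- a4 at v = α
  have ha4 : a4 α d α = 1 - d := by
    apply le_antisymm
    · refine (a4_le_point α d α (d, 0) hd0).trans_eq ?_
      show max (max (1 - d) (α - 0) - max (α - α - 0) 0) 0 = 1 - d
      rw [eα0, sub_zero, show (α:ℝ) - 0 = α from sub_zero α,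
        max_eq_left (show α ≤ 1 - d by linarith), max_eq_left (by linarith)]
    · apply a4_ge α d α _ hd₁
      rintro ⟨x, y⟩ ⟨hx, hy, hxy⟩
      simp only at hx hy hxy ⊢
      have ey : max (α - α - y) 0 = 0 := max_eq_right (by linarith)
      rw [ey, sub_zero]
      exact le_trans (by linarith : 1 - d ≤ 1 - x) ((le_max_left _ _).trans (le_max_left _ _))
  -- value at v = α
  have hsplit : rHKsplit α d α = M := by
    unfold rHKsplit
    rw [ha1, ha2, ha3, ha4]
    apply le_antisymm
    · exact le_trans (min_le_right _ _) (le_trans (min_le_right _ _) (min_le_left _ _))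
    · exact le_min hMle (le_min (by linarith) (le_min le_rfl (by linarith)))
  -- upper bound for every v ≥ 0
  have hub : ∀ v, 0 ≤ v → rHKsplit α d v ≤ M := by
    intro v hv
    have h3 : a3 α d v ≤ M := by
      rcases hcase with ⟨h, h'⟩ | ⟨h, h'⟩
      · refine (a3_le_point α d v (d, 0) hd0).trans ?_
        show max (max (1 - d - v) (α - 0) - max (α - v - 0) 0) 0 ≤ M
        rw [show (α:ℝ) - 0 = α from sub_zero α, show α - v - 0 = α - v from sub_zero _]
        rcases le_total (α - v) 0 with hc | hc
        · rw [max_eq_right hc, sub_zero]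
          exact max_le (max_le (by linarith) (by linarith)) hM0
        · rw [max_eq_left hc]
          refine max_le ?_ hM0
          rw [sub_le_iff_le_add]
          exact max_le (by linarith) (by linarith)
      · refine (a3_le_point α d v (0, d) h0d).trans ?_
        show max (max (1 - 0 - v) (α - d) - max (α - v - d) 0) 0 ≤ M
        rcases le_total (α - v - d) 0 with hc | hc
        · rw [max_eq_right hc, sub_zero]
          exact max_le (max_le (by linarith) (by linarith)) hM0
        · rw [max_eq_left hc]
          refine max_le ?_ hM0
          rw [sub_le_iff_le_add]
          exact max_le (by linarith) (by linarith)
    calc rHKsplit α d v ≤ a3 α d v :=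
          le_trans (min_le_right _ _) (le_trans (min_le_right _ _) (min_le_left _ _))
      _ ≤ M := h3
  have hmem : M ∈ {z : ℝ | ∃ v : ℝ, 0 ≤ v ∧ z = rHKsplit α d v} := ⟨α, hα₁, hsplit.symm⟩
  refine ⟨?_, hsplit⟩
  unfold rHK
  apply le_antisymm
  · exact csSup_le ⟨M, hmem⟩ (by rintro z ⟨v, hv, rfl⟩; exact hub v hv)
  · exact le_csSup ⟨M, by rintro z ⟨v, hv, rfl⟩; exact hub v hv⟩ hmem
end

section
/- Let β, α be real numbers and d ≥ 0. Then inf{ (max(β − x, α − y))^+ : x ≥ 0, y ≥ 0, x + y ≤ d } = ( max( β − d , α − d , (β − d + α)/2 ) )^+, where z^+ = max(z,0). (This evaluates the compound-channel constraint min over the no-outage set {ĥ + ĝ ≤ d} of (β − ĥ ∨ α − ĝ)^+, used for the Z-interference channel sum-rate bound.) -/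
/-- For real `β, α` and `d ≥ 0`,
`inf{(max(β-x, α-y))⁺ : x ≥ 0, y ≥ 0, x+y ≤ d} = (max(β-d, α-d, (β-d+α)/2))⁺`. -/
theorem stmt_12 (β α d : ℝ) (hd : 0 ≤ d) :
    sInf {z : ℝ | ∃ x y : ℝ, 0 ≤ x ∧ 0 ≤ y ∧ x + y ≤ d ∧
        z = max (max (β - x) (α - y)) 0} =
      max (max (β - d) (max (α - d) ((β - d + α)/2))) 0 := by
  set M := max (max (β - d) (max (α - d) ((β - d + α)/2))) 0 with hM
  have hM0 : (0:ℝ) ≤ M := le_max_right _ _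
  have hMβ : β - d ≤ M := le_trans (le_max_left _ _) (le_max_left _ _)
  have hMα : α - d ≤ M :=
    le_trans (le_trans (le_max_left _ _) (le_max_right _ _)) (le_max_left _ _)
  have hMs : (β - d + α)/2 ≤ M :=
    le_trans (le_trans (le_max_right _ _) (le_max_right _ _)) (le_max_left _ _)
  have hMcases : M = β - d ∨ M = α - d ∨ M = (β - d + α)/2 ∨ M = 0 := by
    rcases max_cases (max (β - d) (max (α - d) ((β - d + α)/2))) 0 with ⟨h1, _⟩ | ⟨h1, _⟩
    · rw [hM, h1]
      rcases max_cases (β - d) (max (α - d) ((β - d + α)/2)) with ⟨h2, _⟩ | ⟨h2, _⟩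
      · exact Or.inl h2
      · rw [h2]
        rcases max_cases (α - d) ((β - d + α)/2) with ⟨h3, _⟩ | ⟨h3, _⟩
        · exact Or.inr (Or.inl h3)
        · exact Or.inr (Or.inr (Or.inl h3))
    · exact Or.inr (Or.inr (Or.inr (by rw [hM, h1])))
  apply le_antisymm
  · apply csInf_le
    · refine ⟨0, ?_⟩
      rintro z ⟨x, y, hx, hy, hxy, rfl⟩
      exact le_max_right _ _
    · refine ⟨max (β - M) 0, max (α - M) 0, le_max_right _ _, le_max_right _ _, ?_, ?_⟩
      · rcases max_cases (β - M) 0 with ⟨h1, h1'⟩ | ⟨h1, h1'⟩ <;>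
          rcases max_cases (α - M) 0 with ⟨h2, h2'⟩ | ⟨h2, h2'⟩ <;>
          rw [h1, h2] <;> linarith
      · rcases hMcases with hMe | hMe | hMe | hMe <;>
          rcases max_cases (β - M) 0 with ⟨h1, h1'⟩ | ⟨h1, h1'⟩ <;>
          rcases max_cases (α - M) 0 with ⟨h2, h2'⟩ | ⟨h2, h2'⟩ <;>
          rw [h1, h2] <;> simp only [max_def] <;> split_ifs <;> linarith
  · apply le_csInf
    · exact ⟨max (max (β - 0) (α - 0)) 0, 0, 0, le_refl 0, le_refl 0, by linarith, rfl⟩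
    · rintro z ⟨x, y, hx, hy, hxy, rfl⟩
      have l1 := le_max_left (β - x) (α - y)
      have l2 := le_max_right (β - x) (α - y)
      have l3 := le_max_left (max (β - x) (α - y)) (0:ℝ)
      have l4 := le_max_right (max (β - x) (α - y)) (0:ℝ)
      refine max_le (max_le (by linarith) (max_le (by linarith) (by linarith))) l4
end

section
/- Let A, B, C, D be nonnegative real numbers with A ≤ B. Then the set { (r₁, s₂ + t₂) : 0 ≤ r₁ ≤ A, s₂ ≥ 0, t₂ ≥ 0, r₁ + t₂ ≤ B, s₂ ≤ C, s₂ + t₂ ≤ D } equals the set { (r₁, r₂) ∈ ℝ² : 0 ≤ r₁ ≤ A, 0 ≤ r₂ ≤ D, r₁ + r₂ ≤ B + C }. (This is the Fourier–Motzkin elimination of the private/public rate-split variables (s₂,t₂) in the Han–Kobayashi achievable region of the Z-interference channel.) -/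
/-- Fourier–Motzkin elimination of the rate-split variables
`(s₂, t₂)` for the Z-interference channel: if `0 ≤ A ≤ B` and `C, D ≥ 0`, then
`{(r₁, s₂+t₂) : 0 ≤ r₁ ≤ A, s₂,t₂ ≥ 0, r₁+t₂ ≤ B, s₂ ≤ C, s₂+t₂ ≤ D}
  = {(r₁,r₂) : 0 ≤ r₁ ≤ A, 0 ≤ r₂ ≤ D, r₁+r₂ ≤ B+C}`. -/
theorem stmt_13 (A B C D : ℝ) (hA : 0 ≤ A) (hAB : A ≤ B) (hC : 0 ≤ C) (hD : 0 ≤ D) :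
    {p : ℝ × ℝ | ∃ r₁ s₂ t₂ : ℝ,
        0 ≤ r₁ ∧ r₁ ≤ A ∧ 0 ≤ s₂ ∧ 0 ≤ t₂ ∧
        r₁ + t₂ ≤ B ∧ s₂ ≤ C ∧ s₂ + t₂ ≤ D ∧
        p = (r₁, s₂ + t₂)} =
      {p : ℝ × ℝ | 0 ≤ p.1 ∧ p.1 ≤ A ∧ 0 ≤ p.2 ∧ p.2 ≤ D ∧ p.1 + p.2 ≤ B + C} := by
  ext ⟨x, y⟩
  simp only [Set.mem_setOf_eq, Prod.mk.injEq]
  constructor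
  · rintro ⟨r₁, s₂, t₂, h1, h2, h3, h4, h5, h6, h7, rfl, rfl⟩
    exact ⟨h1, h2, by positivity, h7, by linarith⟩
  · rintro ⟨h1, h2, h3, h4, h5⟩
    refine ⟨x, min C y, y - min C y, h1, h2, le_min hC h3, by simp [le_min_iff], ?_, min_le_left _ _, by linarith [min_le_right C y], rfl, by ring⟩
    rcases le_total C y with h | h
    · rw [min_eq_left h]; linarith
    · rw [min_eq_right h]; linarith
end

section
/- Let β₁, β₂, α₁ be real numbers and d₁, d₂ ≥ 0, and put A = (β₁ − d₁)^+, B = (max(β₁ − d₁, α₁ − d₁, (β₁ − d₁ + α₁)/2))^+, C = (β₂ − α₁ − d₂)^+, D = (β₂ − d₂)^+. Then the projected Han–Kobayashi region { (r₁, s₂ + t₂) : 0 ≤ r₁ ≤ A, s₂ ≥ 0, t₂ ≥ 0, r₁ + t₂ ≤ B, s₂ ≤ C, s₂ + t₂ ≤ D } equals { (r₁, r₂) : 0 ≤ r₁ ≤ (β₁ − d₁)^+, 0 ≤ r₂ ≤ (β₂ − d₂)^+, r₁ + r₂ ≤ (max(β₁ − d₁, α₁ − d₁, (β₁ − d₁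 + α₁)/2))^+ + (β₂ − α₁ − d₂)^+ }. -/
/-- The projected Han–Kobayashi achievable region of the slow-fading
Z-interference channel, with
`A = (β₁-d₁)⁺`, `B = (max(β₁-d₁, α₁-d₁, (β₁-d₁+α₁)/2))⁺`, `C = (β₂-α₁-d₂)⁺`,
`D = (β₂-d₂)⁺`, equals
`{(r₁,r₂) : 0 ≤ r₁ ≤ A, 0 ≤ r₂ ≤ D, r₁+r₂ ≤ B + C}`. -/
theorem stmt_14 (β₁ β₂ α₁ d₁ d₂ : ℝ) (hd₁ : 0 ≤ d₁) (hd₂ : 0 ≤ d₂) :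
    {p : ℝ × ℝ | ∃ r₁ s₂ t₂ : ℝ,
        0 ≤ r₁ ∧ r₁ ≤ max (β₁ - d₁) 0 ∧ 0 ≤ s₂ ∧ 0 ≤ t₂ ∧
        r₁ + t₂ ≤ max (max (β₁ - d₁) (max (α₁ - d₁) ((β₁ - d₁ + α₁)/2))) 0 ∧
        s₂ ≤ max (β₂ - α₁ - d₂) 0 ∧
        s₂ + t₂ ≤ max (β₂ - d₂) 0 ∧
        p = (r₁, s₂ + t₂)} =
      {p : ℝ × ℝ | 0 ≤ p.1 ∧ p.1 ≤ max (β₁ - d₁) 0 ∧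
        0 ≤ p.2 ∧ p.2 ≤ max (β₂ - d₂) 0 ∧
        p.1 + p.2 ≤ max (max (β₁ - d₁) (max (α₁ - d₁) ((β₁ - d₁ + α₁)/2))) 0
          + max (β₂ - α₁ - d₂) 0} := by
  ext p
  simp only [Set.mem_setOf_eq]
  constructor
  · rintro ⟨r₁, s₂, t₂, h1, h2, h3, h4, h5, h6, h7, rfl⟩
    exact ⟨h1, h2, show (0:ℝ) ≤ s₂ + t₂ by linarith, h7,
      show r₁ + (s₂ + t₂) ≤ _ by linarith⟩
  · rintro ⟨h1, h2, h3, h4, h5⟩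
    set C := max (β₂ - α₁ - d₂) 0 with hC
    have hC0 : 0 ≤ C := le_max_right _ _
    refine ⟨p.1, min p.2 C, max (p.2 - C) 0, h1, h2, le_min h3 hC0,
      le_max_right _ _, ?_, min_le_right _ _, ?_, ?_⟩
    · rcases le_total p.2 C with h | h
      · rw [max_eq_right (by linarith)]
        have : p.1 ≤ max (β₁ - d₁) 0 := h2
        have : max (β₁ - d₁) 0 ≤ max (max (β₁ - d₁) (max (α₁ - d₁) ((β₁ - d₁ + α₁)/2))) 0 :=
          max_le_max (le_max_left _ _) le_rfl
        linarith
      · rw [max_eq_left (by linarith)]; linarith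
    · rcases le_total p.2 C with h | h
      · rw [min_eq_left h, max_eq_right (by linarith)]; linarith
      · rw [min_eq_right h, max_eq_left (by linarith)]; linarith
    · rcases le_total p.2 C with h | h
      · rw [min_eq_left h, max_eq_right (by linarith)]
        exact Prod.ext rfl (by ring)
      · rw [min_eq_right h, max_eq_left (by linarith)]
        exact Prod.ext rfl (by ring)
end

section
/- Let 0 ≤ d ≤ 1 and α ≥ 0. Then inf{ (max(1 − x₁, α − y₁))^+ + (1 − α − x₂ + y₁)^+ : x₁ ≥ 0, y₁ ≥ 0, x₁ + y₁ ≤ d, 0 ≤ x₂ ≤ d } = ( max( 1 − d , α − d , (1 − d + α)/2 ) )^+ + (1 − α − d)^+, where z^+ = max(z,0). (This shows the worst-case sum-rate outer bound of the fading Z-interference channel, in which the transmitters know the channel and adapt the power split v₂ = α − ĝ₁, coincides with the sum-rate of the fixed Han–Kobayashi inner bound.) -/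
/-- For `0 ≤ d ≤ 1` and `α ≥ 0`, the worst-case sum-rate outer bound
of the fading Z-interference channel:
`inf{(max(1-x₁, α-y₁))⁺ + (1-α-x₂+y₁)⁺ : x₁,y₁ ≥ 0, x₁+y₁ ≤ d, 0 ≤ x₂ ≤ d}
  = (max(1-d, α-d, (1-d+α)/2))⁺ + (1-α-d)⁺`. -/
theorem stmt_15 (d α : ℝ) (hd₁ : 0 ≤ d) (hd₂ : d ≤ 1) (hα : 0 ≤ α) :
    sInf {z : ℝ | ∃ x₁ y₁ x₂ : ℝ,
        0 ≤ x₁ ∧ 0 ≤ y₁ ∧ x₁ + y₁ ≤ d ∧ 0 ≤ x₂ ∧ x₂ ≤ d ∧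
        z = max (max (1 - x₁) (α - y₁)) 0 + max (1 - α - x₂ + y₁) 0} =
      max (max (1 - d) (max (α - d) ((1 - d + α)/2))) 0 + max (1 - α - d) 0 := by
  apply IsLeast.csInf_eq
  constructor
  · -- membership: the value is attained
    rcases le_total α (1 - d) with h1 | h1
    · -- α ≤ 1 - d : take x₁ = d, y₁ = 0, x₂ = d
      refine ⟨d, 0, d, hd₁, le_refl 0, by linarith, hd₁, le_refl d, ?_⟩
      have e1 : max (max (1 - d) (α - 0)) 0 = 1 - d := by
        rw [max_eq_left (by linarith : α - 0 ≤ 1 - d)]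
        exact max_eq_left (by linarith)
      have e2 : max (max (1 - d) (max (α - d) ((1 - d + α)/2))) 0 = 1 - d := by
        rw [max_eq_left (max_le (by linarith) (by linarith) : max (α - d) ((1 - d + α)/2) ≤ 1 - d)]
        exact max_eq_left (by linarith)
      rw [e1, e2]
      ring_nf
    · rcases le_total α (1 + d) with h2 | h2
      · -- 1 - d ≤ α ≤ 1 + d : take x₁ = (1+d-α)/2, y₁ = (α+d-1)/2, x₂ = d
        refine ⟨(1 + d - α)/2, (α + d - 1)/2, d, by linarith, by linarith, by linarith,
          hd₁, le_refl d, ?_⟩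
        have e1 : max (max (1 - (1 + d - α)/2) (α - (α + d - 1)/2)) 0 = (1 - d + α)/2 := by
          have : (1 : ℝ) - (1 + d - α)/2 = (1 - d + α)/2 := by ring
          have h' : α - (α + d - 1)/2 = (1 - d + α)/2 := by ring
          rw [this, h', max_self]
          exact max_eq_left (by linarith)
        have e2 : max (1 - α - d + (α + d - 1)/2) 0 = 0 :=
          max_eq_right (by linarith)
        have e3 : max (max (1 - d) (max (α - d) ((1 - d + α)/2))) 0 = (1 - d + α)/2 := by
          rw [max_eq_right (by linarith : α - d ≤ (1 - d + α)/2),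
            max_eq_right (by linarith : 1 - d ≤ (1 - d + α)/2)]
          exact max_eq_left (by linarith)
        have e4 : max (1 - α - d) 0 = 0 := max_eq_right (by linarith)
        rw [e1, e2, e3, e4]
      · -- α ≥ 1 + d : take x₁ = 0, y₁ = d, x₂ = d
        refine ⟨0, d, d, le_refl 0, hd₁, by linarith, hd₁, le_refl d, ?_⟩
        have e1 : max (max (1 - 0) (α - d)) 0 = α - d := by
          rw [max_eq_right (by linarith : (1:ℝ) - 0 ≤ α - d)]
          exact max_eq_left (by linarith)
        have e2 : max (1 - α - d + d) 0 = 0 := max_eq_right (by linarith)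
        have e3 : max (max (1 - d) (max (α - d) ((1 - d + α)/2))) 0 = α - d := by
          rw [max_eq_left (by linarith : (1 - d + α)/2 ≤ α - d),
            max_eq_right (by linarith : 1 - d ≤ α - d)]
          exact max_eq_left (by linarith)
        have e4 : max (1 - α - d) 0 = 0 := max_eq_right (by linarith)
        rw [e1, e2, e3, e4]
  · -- lower bound
    rintro z ⟨x₁, y₁, x₂, hx₁, hy₁, hxy, hx₂, hx₂d, rfl⟩
    set A := max (max (1 - x₁) (α - y₁)) 0 with hA
    set B := max (1 - α - x₂ + y₁) 0 with hB
    have hA1 : 1 - x₁ ≤ A := le_trans (le_max_left _ _) (le_max_left _ _)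
    have hA2 : α - y₁ ≤ A := le_trans (le_max_right _ _) (le_max_left _ _)
    have hA0 : (0:ℝ) ≤ A := le_max_right _ _
    have hB1 : 1 - α - x₂ + y₁ ≤ B := le_max_left _ _
    have hB0 : (0:ℝ) ≤ B := le_max_right _ _
    refine add_le_add ?_ ?_
    · refine max_le (max_le (by linarith) (max_le (by linarith) (by linarith))) hA0
    · exact max_le (by linarith) hB0
end

section
/- Let 0 ≤ d ≤ 1 and α ≥ 0. Then the intersection, over all x₁ ≥ 0, y₁ ≥ 0 with x₁ + y₁ ≤ d and all x₂ ∈ [0, d], of the regions R(x₁,y₁,x₂) = { (r₁, r₂) ∈ ℝ≥0² : r₁ ≤ (1 − x₁)^+, r₂ ≤ (1 − x₂)^+, r₁ + r₂ ≤ (max(1 − x₁, α − y₁))^+ + (1 − α − x₂ + y₁)^+ } equals the region { (r₁, r₂) ∈ ℝ≥0² : r₁ ≤ 1 − d, r₂ ≤ 1 − d, r₁ + r₂ ≤ max(1 − d, α − d, (1 − d + α)/2) + (1 − α − d)^+ }. (This is the multiplexing-gain region R(d,d) of Theorem 2 for the Rayleigh-fading two-user Gaussian Z-interference channel with β₁ =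 β₂ = 1 and α₁ = α.) -/
set_option maxHeartbeats 2000000 in
/-- The fundamental multiplexing gain region `R(d,d)` of the
Rayleigh-fading Z-interference channel (`β₁ = β₂ = 1`, cross strength `α`):
the intersection over the no-outage set of the per-state regions equals
`{(r₁,r₂) ∈ ℝ≥0² : r₁ ≤ 1-d, r₂ ≤ 1-d, r₁+r₂ ≤ max(1-d, α-d, (1-d+α)/2) + (1-α-d)⁺}`. -/
theorem stmt_16 (d α : ℝ) (hd₁ : 0 ≤ d) (hd₂ : d ≤ 1) (hα : 0 ≤ α) :
    {p : ℝ × ℝ | 0 ≤ p.1 ∧ 0 ≤ p.2 ∧ ∀ x₁ y₁ x₂ : ℝ,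
        0 ≤ x₁ → 0 ≤ y₁ → x₁ + y₁ ≤ d → 0 ≤ x₂ → x₂ ≤ d →
        (p.1 ≤ max (1 - x₁) 0 ∧ p.2 ≤ max (1 - x₂) 0 ∧
          p.1 + p.2 ≤ max (max (1 - x₁) (α - y₁)) 0 + max (1 - α - x₂ + y₁) 0)} =
      {p : ℝ × ℝ | 0 ≤ p.1 ∧ 0 ≤ p.2 ∧ p.1 ≤ 1 - d ∧ p.2 ≤ 1 - d ∧
        p.1 + p.2 ≤ max (1 - d) (max (α - d) ((1 - d + α)/2)) + max (1 - α - d) 0} := by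
  ext p
  simp only [Set.mem_setOf_eq]
  constructor
  · rintro ⟨h1, h2, h⟩
    refine ⟨h1, h2, ?_, ?_, ?_⟩
    · have h3 := (h d 0 0 hd₁ le_rfl (by linarith) le_rfl hd₁).1
      rw [max_eq_left (by linarith)] at h3
      exact h3
    · have h3 := (h 0 0 d le_rfl le_rfl (by linarith) hd₁ le_rfl).2.1
      rw [max_eq_left (by linarith)] at h3
      exact h3
    · rcases le_total α (1 - d) with hc | hc
      · have h3 := (h d 0 d hd₁ le_rfl (by linarith) hd₁ le_rfl).2.2
        simp only [max_def] at h3 ⊢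
        split_ifs at h3 ⊢ <;> linarith
      · rcases le_total α (1 + d) with hc2 | hc2
        · have h3 := (h ((d - α + 1)/2) ((α - 1 + d)/2) d
            (by linarith) (by linarith) (by linarith) hd₁ le_rfl).2.2
          simp only [max_def] at h3 ⊢
          split_ifs at h3 ⊢ <;> linarith
        · have h3 := (h 0 d d le_rfl hd₁ (by linarith) hd₁ le_rfl).2.2
          simp only [max_def] at h3 ⊢
          split_ifs at h3 ⊢ <;> linarith
  · rintro ⟨h1, h2, h3, h4, h5⟩
    refine ⟨h1, h2, fun x₁ y₁ x₂ hx₁ hy₁ hxy hx₂ hx₂d => ⟨?_, ?_, ?_⟩⟩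
    · exact h3.trans (le_max_of_le_left (by linarith))
    · exact h4.trans (le_max_of_le_left (by linarith))
    · refine h5.trans ?_
      simp only [max_def]
      split_ifs <;> linarith
end
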